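/- arXiv:1312.3257 — 8 statements merged into one kernel-verified Lean document; each statement's English description precedes it below -/
import Mathlib

section
/- Let n ∈ {1,2,3}, let Ω ⊆ ℝⁿ be open, and let d : (0,∞) × Ω → ℝ³ be twice continuously differentiable with |d(t,x)| = 1 for all (t,x). Define the angular momentum w := d_t × d. Then d_t = d × w everywhere on (0,∞) × Ω, and d satisfies the wave map equation d_tt − Δd = (|∇d|² − |d_t|²) d on (0,∞) × Ω if and only if w_t = Δd × d on (0,∞) × Ω. -/
noncomputable section
open scoped BigOperators

/-- Partial derivative in direction `j` of a scalar function on ℝⁿ. -/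
def pd {n : ℕ} (j : Fin n) (u : (Fin n → ℝ) → ℝ) (x : Fin n → ℝ) : ℝ :=
  fderiv ℝ u x (Pi.single j 1)

/-- Laplacian of a scalar function on ℝⁿ. -/
def lap {n : ℕ} (u : (Fin n → ℝ) → ℝ) (x : Fin n → ℝ) : ℝ :=
  ∑ j, pd j (pd j u) x

/-- Time derivative of a time-dependent family of functions. -/
def dtime {α : Type*} {E : Type*} [NormedAddCommGroup E] [NormedSpace ℝ E]
    (f : ℝ → α → E) : ℝ → α → E :=
  fun t x => deriv (fun s => f s x) t

private lemma slice_hasDerivAt {E F : Type*} [NormedAddCommGroup E] [NormedSpace ℝ E]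
    [NormedAddCommGroup F] [NormedSpace ℝ F] {D : ℝ × E → F} {U : Set (ℝ × E)}
    (hU : IsOpen U) (hD : DifferentiableOn ℝ D U) {t : ℝ} {x : E} (h : (t, x) ∈ U) :
    HasDerivAt (fun s => D (s, x)) (fderiv ℝ D (t, x) (1, 0)) t := by
  have hdiff : DifferentiableAt ℝ D (t, x) := hD.differentiableAt (hU.mem_nhds h)
  have hline : HasDerivAt (fun s : ℝ => (s, x)) ((1 : ℝ), (0 : E)) t :=
    HasDerivAt.prodMk (hasDerivAt_id t) (hasDerivAt_const t x)
  exact hdiff.hasFDerivAt.comp_hasDerivAt t hline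

private lemma fderiv_diffOn {E F : Type*} [NormedAddCommGroup E] [NormedSpace ℝ E]
    [NormedAddCommGroup F] [NormedSpace ℝ F] {D : E → F} {U : Set E}
    (hU : IsOpen U) (hD : ContDiffOn ℝ 2 D U) :
    DifferentiableOn ℝ (fderiv ℝ D) U := by
  have h2 : ContDiffOn ℝ ((1 : WithTop ℕ∞) + 1) D U := by exact_mod_cast hD
  have := ((contDiffOn_succ_iff_fderiv_of_isOpen hU).mp h2).2.2
  exact this.differentiableOn one_ne_zero

private lemma spatial_orth {n : ℕ} {Ω : Set (Fin n → ℝ)} (hΩ : IsOpen Ω)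
    {e : (Fin n → ℝ) → Fin 3 → ℝ}
    (he : ContDiffOn ℝ 2 e Ω)
    (hunit : ∀ y ∈ Ω, ∑ k, e y k ^ 2 = 1)
    {x : Fin n → ℝ} (hx : x ∈ Ω) :
    (∑ j, ∑ k, pd j (fun y => e y k) x ^ 2)
        + ∑ k, e x k * lap (fun y => e y k) x = 0 := by
  have hek : ∀ k, ContDiffOn ℝ 2 (fun y => e y k) Ω := fun k =>
    (ContinuousLinearMap.proj k : (Fin 3 → ℝ) →L[ℝ] ℝ).contDiff.comp_contDiffOn he
  have hekd : ∀ k, ∀ y ∈ Ω, DifferentiableAt ℝ (fun y => e y k) y := fun k y hy =>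
    ((hek k).differentiableOn (by norm_num)).differentiableAt (hΩ.mem_nhds hy)
  have hP : ∀ j : Fin n, ∀ y ∈ Ω, ∑ k, e y k * pd j (fun z => e z k) y = 0 := by
    intro j y hy
    have hq : HasFDerivAt (fun z => ∑ k, e z k * e z k)
        (∑ k, (e y k • fderiv ℝ (fun z => e z k) y + e y k • fderiv ℝ (fun z => e z k) y)) y :=
      HasFDerivAt.fun_sum fun k _ =>
        ((hekd k y hy).hasFDerivAt.mul (hekd k y hy).hasFDerivAt)
    have hq0 : HasFDerivAt (fun z => ∑ k, e z k * e z k)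
        (0 : (Fin n → ℝ) →L[ℝ] ℝ) y := by
      refine (hasFDerivAt_const (1 : ℝ) y).congr_of_eventuallyEq ?_
      filter_upwards [hΩ.mem_nhds hy] with z hz
      simpa [sq] using hunit z hz
    have h := hq.unique hq0
    have h2 := congrArg (fun L : (Fin n → ℝ) →L[ℝ] ℝ => L (Pi.single j 1)) h
    simp only [ContinuousLinearMap.sum_apply, ContinuousLinearMap.add_apply,
      ContinuousLinearMap.smul_apply, smul_eq_mul, ContinuousLinearMap.zero_apply] at h2
    have h3 : ∑ k, 2 * (e y k * pd j (fun z => e z k) y) = 0 := by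
      rw [← h2]; congr 1; funext k
      show 2 * (e y k * fderiv ℝ (fun z => e z k) y (Pi.single j 1)) = _; ring
    rw [← Finset.mul_sum] at h3
    linarith
  have hQ : ∀ j : Fin n,
      ∑ k, (pd j (fun y => e y k) x * pd j (fun y => e y k) x
        + e x k * pd j (pd j (fun y => e y k)) x) = 0 := by
    intro j
    have hpdd : ∀ k, DifferentiableAt ℝ (fun y => pd j (fun z => e z k) y) x := by
      intro k
      have h1 : DifferentiableAt ℝ (fderiv ℝ (fun y => e y k)) x :=
        (fderiv_diffOn hΩ (hek k)).differentiableAt (hΩ.mem_nhds hx)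
      exact h1.clm_apply (differentiableAt_const _)
    have hR : HasFDerivAt (fun y => ∑ k, e y k * pd j (fun z => e z k) y)
        (∑ k, (e x k • fderiv ℝ (fun y => pd j (fun z => e z k) y) x
          + pd j (fun z => e z k) x • fderiv ℝ (fun z => e z k) x)) x :=
      HasFDerivAt.fun_sum fun k _ =>
        ((hekd k x hx).hasFDerivAt.mul (hpdd k).hasFDerivAt)
    have hR0 : HasFDerivAt (fun y => ∑ k, e y k * pd j (fun z => e z k) y)
        (0 : (Fin n → ℝ) →L[ℝ] ℝ) x := by
      refine (hasFDerivAt_const (0 : ℝ) x).congr_of_eventuallyEq ?_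
      filter_upwards [hΩ.mem_nhds hx] with z hz
      exact hP j z hz
    have h := hR.unique hR0
    have h2 := congrArg (fun L : (Fin n → ℝ) →L[ℝ] ℝ => L (Pi.single j 1)) h
    simp only [ContinuousLinearMap.sum_apply, ContinuousLinearMap.add_apply,
      ContinuousLinearMap.smul_apply, smul_eq_mul, ContinuousLinearMap.zero_apply] at h2
    rw [← h2]; congr 1; funext k
    show pd j (fun y => e y k) x * pd j (fun y => e y k) x
        + e x k * pd j (pd j (fun y => e y k)) x
      = e x k * fderiv ℝ (fun y => pd j (fun z => e z k) y) x (Pi.single j 1)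
        + pd j (fun z => e z k) x * fderiv ℝ (fun z => e z k) x (Pi.single j 1)
    rw [show pd j (pd j (fun y => e y k)) x
        = fderiv ℝ (fun y => pd j (fun z => e z k) y) x (Pi.single j 1) from rfl,
      show pd j (fun z => e z k) x = fderiv ℝ (fun z => e z k) x (Pi.single j 1) from rfl]
    ring
  have hswap : ∑ k, e x k * lap (fun y => e y k) x
      = ∑ j, ∑ k, e x k * pd j (pd j (fun y => e y k)) x := by
    rw [Finset.sum_comm]
    congr 1; funext k
    rw [show lap (fun y => e y k) x = ∑ j, pd j (pd j (fun y => e y k)) x from rfl,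
      Finset.mul_sum]
  rw [hswap, ← Finset.sum_add_distrib]
  rw [show (0:ℝ) = ∑ j : Fin n, (0:ℝ) by simp]
  congr 1; funext j
  rw [← hQ j, ← Finset.sum_add_distrib]
  congr 1; funext k; ring

/-- For a twice continuously differentiable sphere-valued map
`d : (0,∞) × Ω → ℝ³` with angular momentum `w := d_t × d`, one has `d_t = d × w`
on `(0,∞) × Ω`, and `d` solves the wave map equation
`d_tt - Δd = (|∇d|² - |d_t|²) d` there iff `w_t = Δd × d` there. -/
theorem angular_momentum_formulation
    (n : ℕ) (hn : n = 1 ∨ n = 2 ∨ n = 3)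
    (Ω : Set (Fin n → ℝ)) (hΩ : IsOpen Ω)
    (d : ℝ → (Fin n → ℝ) → Fin 3 → ℝ)
    (hd : ContDiffOn ℝ 2 (fun p : ℝ × (Fin n → ℝ) => d p.1 p.2) (Set.Ioi 0 ×ˢ Ω))
    (hunit : ∀ t ∈ Set.Ioi (0 : ℝ), ∀ x ∈ Ω, ∑ k, d t x k ^ 2 = 1)
    (w : ℝ → (Fin n → ℝ) → Fin 3 → ℝ)
    (hw : w = fun t x => crossProduct (dtime d t x) (d t x)) :
    (∀ t ∈ Set.Ioi (0 : ℝ), ∀ x ∈ Ω,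
        dtime d t x = crossProduct (d t x) (w t x)) ∧
    ((∀ t ∈ Set.Ioi (0 : ℝ), ∀ x ∈ Ω,
        (fun k => dtime (dtime d) t x k - lap (fun y => d t y k) x)
          = ((∑ j, ∑ k, pd j (fun y => d t y k) x ^ 2)
              - ∑ k, dtime d t x k ^ 2) • d t x)
      ↔ (∀ t ∈ Set.Ioi (0 : ℝ), ∀ x ∈ Ω,
          dtime w t x = crossProduct (fun k => lap (fun y => d t y k) x) (d t x))) := by
  subst hw
  set U : Set (ℝ × (Fin n → ℝ)) := Set.Ioi 0 ×ˢ Ω with hUdef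
  have hUopen : IsOpen U := isOpen_Ioi.prod hΩ
  set D : ℝ × (Fin n → ℝ) → Fin 3 → ℝ := fun p => d p.1 p.2 with hDdef
  have hDdiff : DifferentiableOn ℝ D U := hd.differentiableOn (by norm_num)
  have hmem : ∀ t ∈ Set.Ioi (0 : ℝ), ∀ x ∈ Ω, ((t, x) : ℝ × (Fin n → ℝ)) ∈ U :=
    fun t ht x hx => Set.mk_mem_prod ht hx
  -- A : first time derivative
  have hA : ∀ t ∈ Set.Ioi (0 : ℝ), ∀ x ∈ Ω,
      HasDerivAt (fun s => d s x) (dtime d t x) t := by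
    intro t ht x hx
    have h := slice_hasDerivAt hUopen hDdiff (hmem t ht x hx)
    have : dtime d t x = fderiv ℝ D (t, x) (1, 0) := h.deriv
    rw [this]; exact h
  -- B : second time derivative
  have hB : ∀ t ∈ Set.Ioi (0 : ℝ), ∀ x ∈ Ω,
      HasDerivAt (fun s => dtime d s x) (dtime (dtime d) t x) t := by
    intro t ht x hx
    have hF : DifferentiableOn ℝ (fderiv ℝ D) U := fderiv_diffOn hUopen hd
    have hline := slice_hasDerivAt hUopen hF (hmem t ht x hx)
    have h1 : HasDerivAt (fun s => fderiv ℝ D (s, x) ((1 : ℝ), (0 : Fin n → ℝ)))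
        (fderiv ℝ (fderiv ℝ D) (t, x) (1, 0) (1, 0)) t := by
      simpa using hline.clm_apply (hasDerivAt_const t ((1 : ℝ), (0 : Fin n → ℝ)))
    have heq : (fun s => dtime d s x) =ᶠ[nhds t]
        (fun s => fderiv ℝ D (s, x) ((1 : ℝ), (0 : Fin n → ℝ))) := by
      filter_upwards [Ioi_mem_nhds ht] with s hs
      exact (slice_hasDerivAt hUopen hDdiff (hmem s hs x hx)).deriv
    have h2 := h1.congr_of_eventuallyEq heq
    have : dtime (dtime d) t x = fderiv ℝ (fderiv ℝ D) (t, x) (1, 0) (1, 0) := h2.deriv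
    rw [this]; exact h2
  -- C : d ⬝ d_t = 0
  have hC : ∀ t ∈ Set.Ioi (0 : ℝ), ∀ x ∈ Ω,
      ∑ k, d t x k * dtime d t x k = 0 := by
    intro t ht x hx
    have hAk : ∀ k, HasDerivAt (fun s => d s x k) (dtime d t x k) t :=
      fun k => hasDerivAt_pi.mp (hA t ht x hx) k
    have hg : HasDerivAt (fun s => ∑ k, d s x k * d s x k)
        (∑ k, (dtime d t x k * d t x k + d t x k * dtime d t x k)) t :=
      HasDerivAt.fun_sum fun k _ => (hAk k).mul (hAk k)
    have hg0 : HasDerivAt (fun s => ∑ k, d s x k * d s x k) 0 t := by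
      refine (hasDerivAt_const t (1 : ℝ)).congr_of_eventuallyEq ?_
      filter_upwards [Ioi_mem_nhds ht] with s hs
      simpa [sq] using hunit s hs x hx
    have h1 := hg.unique hg0
    have h2 : ∑ k, 2 * (d t x k * dtime d t x k) = 0 := by
      rw [← h1]; congr 1; funext k; ring
    rw [← Finset.mul_sum] at h2
    linarith
  -- D : |d_t|² + d ⬝ d_tt = 0
  have hD2 : ∀ t ∈ Set.Ioi (0 : ℝ), ∀ x ∈ Ω,
      ∑ k, dtime d t x k ^ 2 + ∑ k, d t x k * dtime (dtime d) t x k = 0 := by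
    intro t ht x hx
    have hAk : ∀ k, HasDerivAt (fun s => d s x k) (dtime d t x k) t :=
      fun k => hasDerivAt_pi.mp (hA t ht x hx) k
    have hBk : ∀ k, HasDerivAt (fun s => dtime d s x k) (dtime (dtime d) t x k) t :=
      fun k => hasDerivAt_pi.mp (hB t ht x hx) k
    have hg : HasDerivAt (fun s => ∑ k, d s x k * dtime d s x k)
        (∑ k, (dtime d t x k * dtime d t x k + d t x k * dtime (dtime d) t x k)) t :=
      HasDerivAt.fun_sum fun k _ => (hAk k).mul (hBk k)
    have hg0 : HasDerivAt (fun s => ∑ k, d s x k * dtime d s x k) 0 t := by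
      refine (hasDerivAt_const t (0 : ℝ)).congr_of_eventuallyEq ?_
      filter_upwards [Ioi_mem_nhds ht] with s hs
      exact hC s hs x hx
    have h := hg.unique hg0
    calc ∑ k, dtime d t x k ^ 2 + ∑ k, d t x k * dtime (dtime d) t x k
        = ∑ k, (dtime d t x k * dtime d t x k + d t x k * dtime (dtime d) t x k) := by
          rw [← Finset.sum_add_distrib]; congr 1; funext k; ring
      _ = 0 := h
  -- E : |∇d|² + d ⬝ Δd = 0
  have hE : ∀ t ∈ Set.Ioi (0 : ℝ), ∀ x ∈ Ω,
      (∑ j, ∑ k, pd j (fun y => d t y k) x ^ 2)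
        + ∑ k, d t x k * lap (fun y => d t y k) x = 0 := by
    intro t ht x hx
    have he : ContDiffOn ℝ 2 (fun y => d t y) Ω := by
      have hline : ContDiffOn ℝ 2 (fun y : Fin n → ℝ => ((t, y) : ℝ × (Fin n → ℝ))) Ω :=
        (contDiff_const.prodMk contDiff_id).contDiffOn
      exact hd.comp hline (fun y hy => hmem t ht y hy)
    exact spatial_orth hΩ he (fun y hy => hunit t ht y hy) hx
  -- F : time derivative of w
  have hF : ∀ t ∈ Set.Ioi (0 : ℝ), ∀ x ∈ Ω,
      dtime (fun t x => crossProduct (dtime d t x) (d t x)) t x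
        = crossProduct (dtime (dtime d) t x) (d t x) := by
    intro t ht x hx
    have hAk : ∀ k, HasDerivAt (fun s => d s x k) (dtime d t x k) t :=
      fun k => hasDerivAt_pi.mp (hA t ht x hx) k
    have hBk : ∀ k, HasDerivAt (fun s => dtime d s x k) (dtime (dtime d) t x k) t :=
      fun k => hasDerivAt_pi.mp (hB t ht x hx) k
    have helper : ∀ i j : Fin 3, HasDerivAt
        (fun s => dtime d s x i * d s x j - dtime d s x j * d s x i)
        (dtime (dtime d) t x i * d t x j - dtime (dtime d) t x j * d t x i) t := by
      intro i j
      have h := ((hBk i).fun_mul (hAk j)).fun_sub ((hBk j).fun_mul (hAk i))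
      exact h.congr_deriv (by ring)
    have hcr : HasDerivAt (fun s => crossProduct (dtime d s x) (d s x))
        (crossProduct (dtime (dtime d) t x) (d t x)) t := by
      rw [hasDerivAt_pi]
      intro k
      fin_cases k <;> simp only [cross_apply, Matrix.cons_val_zero, Matrix.cons_val_one,
        Matrix.head_cons, Matrix.cons_val_two, Matrix.tail_cons, Fin.isValue] <;>
        [exact helper 1 2; exact helper 2 0; exact helper 0 1]
    exact hcr.deriv
  constructor
  · -- d_t = d × w
    intro t ht x hx
    have h1 := hunit t ht x hx
    have h2 := hC t ht x hx
    rw [Fin.sum_univ_three] at h1 h2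
    funext k
    fin_cases k <;>
      simp only [Fin.zero_eta, Fin.mk_one, Fin.reduceFinMk, cross_apply, Matrix.cons_val_zero,
        Matrix.cons_val_one, Matrix.head_cons, Matrix.cons_val_two, Matrix.tail_cons,
        Fin.isValue] <;>
    [ linear_combination (-(dtime d t x 0)) * h1 + d t x 0 * h2;
      linear_combination (-(dtime d t x 1)) * h1 + d t x 1 * h2;
      linear_combination (-(dtime d t x 2)) * h1 + d t x 2 * h2]
  constructor
  · -- wave map ⇒ angular momentum
    intro hwave t ht x hx
    rw [hF t ht x hx]
    have h := hwave t ht x hx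
    have hk : ∀ k, dtime (dtime d) t x k - lap (fun y => d t y k) x
        = ((∑ j, ∑ k, pd j (fun y => d t y k) x ^ 2)
            - ∑ k, dtime d t x k ^ 2) * d t x k := by
      intro k
      have := congrFun h k
      simpa using this
    funext k
    fin_cases k <;>
      simp only [Fin.zero_eta, Fin.mk_one, Fin.reduceFinMk, cross_apply, Matrix.cons_val_zero,
        Matrix.cons_val_one, Matrix.head_cons, Matrix.cons_val_two, Matrix.tail_cons,
        Fin.isValue] <;>
    [ linear_combination d t x 2 * hk 1 - d t x 1 * hk 2;
      linear_combination d t x 0 * hk 2 - d t x 2 * hk 0;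
      linear_combination d t x 1 * hk 0 - d t x 0 * hk 1]
  · -- angular momentum ⇒ wave map
    intro hcr t ht x hx
    have h := hcr t ht x hx
    rw [hF t ht x hx] at h
    have c0 := congrFun h 0
    have c1 := congrFun h 1
    have c2 := congrFun h 2
    simp only [cross_apply, Matrix.cons_val_zero, Matrix.cons_val_one, Matrix.head_cons,
      Matrix.cons_val_two, Matrix.tail_cons, Fin.isValue] at c0 c1 c2
    have h1 := hunit t ht x hx
    have hD2' := hD2 t ht x hx
    have hE' := hE t ht x hx
    rw [Fin.sum_univ_three] at h1
    rw [show (∑ k, dtime d t x k ^ 2)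
        = dtime d t x 0 ^ 2 + dtime d t x 1 ^ 2 + dtime d t x 2 ^ 2 from Fin.sum_univ_three _,
      show (∑ k, d t x k * dtime (dtime d) t x k)
        = d t x 0 * dtime (dtime d) t x 0 + d t x 1 * dtime (dtime d) t x 1
          + d t x 2 * dtime (dtime d) t x 2 from Fin.sum_univ_three _] at hD2'
    rw [show (∑ k, d t x k * lap (fun y => d t y k) x)
        = d t x 0 * lap (fun y => d t y 0) x + d t x 1 * lap (fun y => d t y 1) x
          + d t x 2 * lap (fun y => d t y 2) x from Fin.sum_univ_three _] at hE'
    funext k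
    rw [show (∑ k, dtime d t x k ^ 2)
        = dtime d t x 0 ^ 2 + dtime d t x 1 ^ 2 + dtime d t x 2 ^ 2 from Fin.sum_univ_three _]
    fin_cases k <;> simp only [Fin.zero_eta, Fin.mk_one, Fin.reduceFinMk, Pi.smul_apply,
      smul_eq_mul, Fin.isValue] <;>
    [ linear_combination (-(dtime (dtime d) t x 0 - lap (fun y => d t y 0) x)) * h1
        + d t x 0 * hD2' - d t x 0 * hE' + d t x 1 * c2 - d t x 2 * c1;
      linear_combination (-(dtime (dtime d) t x 1 - lap (fun y => d t y 1) x)) * h1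
        + d t x 1 * hD2' - d t x 1 * hE' - d t x 0 * c2 + d t x 2 * c0;
      linear_combination (-(dtime (dtime d) t x 2 - lap (fun y => d t y 2) x)) * h1
        + d t x 2 * hD2' - d t x 2 * hE' + d t x 0 * c1 - d t x 1 * c0]
end
end

section
/- Let τ > 0 and d, d′, w ∈ ℝ³. Then (d′ − d)/τ = ((d + d′)/2) × w if and only if d′ = V_τ(w) d. -/
noncomputable section
open scoped BigOperators

/-- Squared Euclidean norm on ℝ³. -/
def sq3 (v : Fin 3 → ℝ) : ℝ := ∑ i, v i ^ 2

/-- The propagation matrix `V_τ(w)` of the angular momentum method, applied to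
a vector `v`:
`V_τ(w) = (1 + (τ²/4)|w|²)⁻¹ [ (1 − (τ²/4)|w|²) I + (τ²/2)(w ⊗ w) + τ Q(w) ]`,
where `Q(w)v = v × w` and `(w ⊗ w)v = (w·v) w`. -/
def Vmat (τ : ℝ) (w v : Fin 3 → ℝ) : Fin 3 → ℝ :=
  (1 + τ ^ 2 / 4 * sq3 w)⁻¹ •
    ((1 - τ ^ 2 / 4 * sq3 w) • v + (τ ^ 2 / 2 * ∑ i, w i * v i) • w
      + τ • crossProduct v w)

set_option maxHeartbeats 1600000 in
/-- The implicit midpoint relation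
`(d′ − d)/τ = ((d + d′)/2) × w` holds iff `d′ = V_τ(w) d`. -/
theorem midpoint_step_iff_Vmat
    (τ : ℝ) (hτ : 0 < τ) (d d' w : Fin 3 → ℝ) :
    τ⁻¹ • (d' - d) = crossProduct ((2 : ℝ)⁻¹ • (d + d')) w ↔ d' = Vmat τ w d := by
  have hdet : (1 + τ ^ 2 / 4 * sq3 w) ≠ 0 := by
    have : 0 ≤ sq3 w := Finset.sum_nonneg fun i _ => sq_nonneg _
    positivity
  have hdet' : (1 + τ ^ 2 / 4 * (w 0 ^ 2 + w 1 ^ 2 + w 2 ^ 2)) ≠ 0 := by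
    rwa [sq3, Fin.sum_univ_three] at hdet
  constructor
  · intro h
    rw [inv_smul_eq_iff₀ hτ.ne'] at h
    have F0 := congrFun h 0
    have F1 := congrFun h 1
    have F2 := congrFun h 2
    simp [crossProduct, Pi.smul_apply, Pi.sub_apply, Pi.add_apply] at F0 F1 F2
    funext i
    fin_cases i <;>
      simp [Vmat, sq3, crossProduct, Fin.sum_univ_three, Pi.smul_apply, Pi.add_apply,
        Matrix.vecHead, Matrix.vecTail, Function.comp] <;>
      rw [eq_inv_mul_iff_mul_eq₀ hdet']
    · linear_combination (1 + (τ/2)^2 * w 0^2) * F0 + (τ/2 * w 2 + (τ/2)^2 * w 0 * w 1) * F1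
        + (-(τ/2) * w 1 + (τ/2)^2 * w 0 * w 2) * F2
    · linear_combination (-(τ/2) * w 2 + (τ/2)^2 * w 0 * w 1) * F0 + (1 + (τ/2)^2 * w 1^2) * F1
        + (τ/2 * w 0 + (τ/2)^2 * w 1 * w 2) * F2
    · linear_combination (τ/2 * w 1 + (τ/2)^2 * w 0 * w 2) * F0
        + (-(τ/2) * w 0 + (τ/2)^2 * w 1 * w 2) * F1 + (1 + (τ/2)^2 * w 2^2) * F2
  · intro h
    have V0 := congrFun h 0
    have V1 := congrFun h 1
    have V2 := congrFun h 2
    simp [Vmat, sq3, crossProduct, Fin.sum_univ_three, Pi.smul_apply, Pi.add_apply,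
      Matrix.vecHead, Matrix.vecTail, Function.comp] at V0 V1 V2
    funext i
    fin_cases i <;>
      simp [crossProduct, Pi.smul_apply, Pi.sub_apply, Pi.add_apply,
        Matrix.vecHead, Matrix.vecTail, Function.comp]
    · rw [V0, V1, V2]; field_simp [hdet']; ring
    · rw [V0, V1, V2]; field_simp [hdet']; ring
    · rw [V0, V1, V2]; field_simp [hdet']; ring
end
end

section
/- Let M ≥ 1, h = 1/M, Δt > 0, and let dᵐ, dᵐ⁺¹, wᵐ, wᵐ⁺¹ : (ℤ/Mℤ)³ → ℝ³ be periodic grid functions satisfying, at every grid point i, (dᵐ⁺¹_i − dᵐ_i)/Δt = d^{m+1/2}_i × w^{m+1/2}_i and (wᵐ⁺¹_i − wᵐ_i)/Δt = (Δ_h d^{m+1/2})_i × d^{m+1/2}_i, where d^{m+1/2} = (dᵐ + dᵐ⁺¹)/2 and w^{m+1/2} = (wᵐ + wᵐ⁺¹)/2. Then (i) |dᵐ⁺¹_i| = |dᵐ_i| for every grid point i, and (ii) the discrete energy is conserved: ½ h³ Σ_i (|∇_h dᵐ⁺¹(i)|² + |wᵐ⁺¹(i)|²) = ½ h³ Σ_i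 (|∇_h dᵐ(i)|² + |wᵐ(i)|²). -/
noncomputable section
open scoped BigOperators
open Matrix

/-- Euclidean norm on ℝ³. -/
def enorm3 (v : Fin 3 → ℝ) : ℝ := Real.sqrt (∑ i, v i ^ 2)

/-- Forward difference `D⁺_j` of a periodic grid function on `(ℤ/Mℤ)³`. -/
def Dp {M : ℕ} (h : ℝ) (u : (Fin 3 → ZMod M) → Fin 3 → ℝ) (j : Fin 3)
    (i : Fin 3 → ZMod M) : Fin 3 → ℝ :=
  h⁻¹ • (u (i + Pi.single j 1) - u i)

/-- Backward difference `D⁻_j`. -/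
def Dm {M : ℕ} (h : ℝ) (u : (Fin 3 → ZMod M) → Fin 3 → ℝ) (j : Fin 3)
    (i : Fin 3 → ZMod M) : Fin 3 → ℝ :=
  h⁻¹ • (u i - u (i - Pi.single j 1))

/-- Discrete Laplacian `Δ_h = Σ_j D⁺_j D⁻_j`. -/
def lapl {M : ℕ} (h : ℝ) (u : (Fin 3 → ZMod M) → Fin 3 → ℝ)
    (i : Fin 3 → ZMod M) : Fin 3 → ℝ :=
  ∑ j, Dp h (Dm h u j) j i

lemma dot_sum3' (u : Fin 3 → ℝ) (w : Fin 3 → Fin 3 → ℝ) :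
    u ⬝ᵥ (∑ j, w j) = ∑ j, u ⬝ᵥ w j := by
  simp only [dotProduct, Finset.sum_apply, Finset.mul_sum]
  rw [Finset.sum_comm]

lemma sbp' {M : ℕ} [NeZero M] (h : ℝ) (f g : (Fin 3 → ZMod M) → Fin 3 → ℝ) (j : Fin 3) :
    ∑ i, f i ⬝ᵥ Dp h g j i = -∑ i, (Dm h f j i) ⬝ᵥ g i := by
  have key : ∑ i, h⁻¹ * (f i ⬝ᵥ g (i + Pi.single j 1))
      = ∑ i, h⁻¹ * (f (i - Pi.single j 1) ⬝ᵥ g i) :=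
    Fintype.sum_equiv (Equiv.addRight (Pi.single j 1)) _ _ (fun i => by simp)
  simp only [Dp, Dm, dotProduct_smul, smul_dotProduct, dotProduct_sub, sub_dotProduct,
    smul_eq_mul, mul_sub]
  rw [Finset.sum_sub_distrib, key]
  simp [neg_sub, Finset.sum_sub_distrib]

lemma lapl_sbp' {M : ℕ} [NeZero M] (h : ℝ) (u v : (Fin 3 → ZMod M) → Fin 3 → ℝ) :
    ∑ i, u i ⬝ᵥ lapl h v i = -∑ i, ∑ j, (Dm h u j i) ⬝ᵥ (Dm h v j i) := by
  simp only [lapl, dot_sum3']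
  rw [Finset.sum_comm, Finset.sum_congr rfl (fun j _ => sbp' h u (Dm h v j) j)]
  simp only [Finset.sum_neg_distrib]
  rw [Finset.sum_comm]

/-- One step of the angular momentum scheme preserves the
pointwise length `|dᵐ⁺¹_i| = |dᵐ_i|` and the discrete energy
`½ h³ Σ_i (|∇_h d(i)|² + |w(i)|²)`. -/
theorem scheme_preserves_length_and_energy
    (M : ℕ) [NeZero M] (hM : 1 ≤ M) (h Δt : ℝ) (hh : h = 1 / M) (hΔt : 0 < Δt)
    (dm dm1 wm wm1 : (Fin 3 → ZMod M) → Fin 3 → ℝ)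
    (heq1 : ∀ i, Δt⁻¹ • (dm1 i - dm i)
      = crossProduct ((2 : ℝ)⁻¹ • (dm i + dm1 i)) ((2 : ℝ)⁻¹ • (wm i + wm1 i)))
    (heq2 : ∀ i, Δt⁻¹ • (wm1 i - wm i)
      = crossProduct (lapl h (fun j => (2 : ℝ)⁻¹ • (dm j + dm1 j)) i)
          ((2 : ℝ)⁻¹ • (dm i + dm1 i))) :
    (∀ i, enorm3 (dm1 i) = enorm3 (dm i)) ∧
    (1 / 2 : ℝ) * (h ^ 3 * ∑ i, ((∑ j, ∑ k, Dm h dm1 j i k ^ 2) + ∑ k, wm1 i k ^ 2))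
      = (1 / 2 : ℝ) * (h ^ 3 * ∑ i, ((∑ j, ∑ k, Dm h dm j i k ^ 2) + ∑ k, wm i k ^ 2)) := by
  set L : (Fin 3 → ZMod M) → Fin 3 → ℝ :=
    lapl h (fun j => (2 : ℝ)⁻¹ • (dm j + dm1 j)) with hL
  have heq1' : ∀ i, dm1 i - dm i
      = Δt • crossProduct ((2 : ℝ)⁻¹ • (dm i + dm1 i)) ((2 : ℝ)⁻¹ • (wm i + wm1 i)) := by
    intro i
    rw [← heq1 i, smul_smul, mul_inv_cancel₀ hΔt.ne', one_smul]
  have heq2' : ∀ i, wm1 i - wm i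
      = Δt • crossProduct (L i) ((2 : ℝ)⁻¹ • (dm i + dm1 i)) := by
    intro i
    rw [← heq2 i, smul_smul, mul_inv_cancel₀ hΔt.ne', one_smul]
  -- pointwise length preservation (sum of squares)
  have hlen : ∀ i, ∑ k, dm1 i k ^ 2 = ∑ k, dm i k ^ 2 := by
    intro i
    have e0 := congrFun (heq1' i) 0
    have e1 := congrFun (heq1' i) 1
    have e2 := congrFun (heq1' i) 2
    simp only [crossProduct, Pi.sub_apply, Pi.smul_apply, Pi.add_apply, smul_eq_mul,
      LinearMap.mk₂_apply, Matrix.cons_val_zero, Matrix.cons_val_one, Matrix.head_cons,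
      Matrix.cons_val_two, Matrix.tail_cons] at e0 e1 e2
    rw [Fin.sum_univ_three, Fin.sum_univ_three]
    linear_combination (dm i 0 + dm1 i 0) * e0 + (dm i 1 + dm1 i 1) * e1
      + (dm i 2 + dm1 i 2) * e2
  -- pointwise energy balance for w
  have hw : ∀ i, (∑ k, wm1 i k ^ 2) - (∑ k, wm i k ^ 2)
      = 2 * ((dm1 i - dm i) ⬝ᵥ L i) := by
    intro i
    have e0 := congrFun (heq1' i) 0
    have e1 := congrFun (heq1' i) 1
    have e2 := congrFun (heq1' i) 2
    have f0 := congrFun (heq2' i) 0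
    have f1 := congrFun (heq2' i) 1
    have f2 := congrFun (heq2' i) 2
    simp only [crossProduct, Pi.sub_apply, Pi.smul_apply, Pi.add_apply, smul_eq_mul,
      LinearMap.mk₂_apply, Matrix.cons_val_zero, Matrix.cons_val_one, Matrix.head_cons,
      Matrix.cons_val_two, Matrix.tail_cons] at e0 e1 e2 f0 f1 f2
    simp only [dotProduct, Pi.sub_apply]
    rw [Fin.sum_univ_three, Fin.sum_univ_three, Fin.sum_univ_three]
    linear_combination (wm i 0 + wm1 i 0) * f0 + (wm i 1 + wm1 i 1) * f1
      + (wm i 2 + wm1 i 2) * f2 - 2 * L i 0 * e0 - 2 * L i 1 * e1 - 2 * L i 2 * e2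
  -- pointwise gradient identity
  have hgrad : ∀ (j : Fin 3) (i : Fin 3 → ZMod M),
      (Dm h (fun t => dm1 t - dm t) j i) ⬝ᵥ (Dm h (fun t => (2 : ℝ)⁻¹ • (dm t + dm1 t)) j i)
        = (2 : ℝ)⁻¹ * ((∑ k, Dm h dm1 j i k ^ 2) - ∑ k, Dm h dm j i k ^ 2) := by
    intro j i
    simp only [Dm, dotProduct, Pi.sub_apply, Pi.smul_apply, Pi.add_apply, smul_eq_mul]
    rw [Fin.sum_univ_three, Fin.sum_univ_three, Fin.sum_univ_three]
    ring
  -- summation by parts for the laplacian term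
  have hlap : ∑ i, (dm1 i - dm i) ⬝ᵥ L i
      = -((2 : ℝ)⁻¹ * ((∑ i, ∑ j, ∑ k, Dm h dm1 j i k ^ 2)
          - ∑ i, ∑ j, ∑ k, Dm h dm j i k ^ 2)) := by
    have := lapl_sbp' h (fun t => dm1 t - dm t) (fun t => (2 : ℝ)⁻¹ • (dm t + dm1 t))
    rw [← hL] at this
    rw [this]
    rw [Finset.sum_congr rfl (fun i _ => Finset.sum_congr rfl (fun j _ => hgrad j i))]
    simp only [Finset.mul_sum, Finset.sum_sub_distrib, mul_sub]
  constructor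
  · intro i
    unfold enorm3
    rw [hlen i]
  · have hwsum : (∑ i, ∑ k, wm1 i k ^ 2) - (∑ i, ∑ k, wm i k ^ 2)
        = 2 * ∑ i, (dm1 i - dm i) ⬝ᵥ L i := by
      rw [← Finset.sum_sub_distrib, Finset.sum_congr rfl (fun i _ => hw i), Finset.mul_sum]
    have key : (∑ i, ((∑ j, ∑ k, Dm h dm1 j i k ^ 2) + ∑ k, wm1 i k ^ 2))
        = ∑ i, ((∑ j, ∑ k, Dm h dm j i k ^ 2) + ∑ k, wm i k ^ 2) := by
      rw [Finset.sum_add_distrib, Finset.sum_add_distrib]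
      rw [hlap] at hwsum
      linarith
    rw [key]
end
end

section
/- Let h > 0 and let u = (u⁽¹⁾, u⁽²⁾, u⁽³⁾) : ℤ³ → ℝ³. Then at every point of ℤ³, u × Δ_h u equals the row-wise forward divergence Div_h of the 3 × 3 matrix whose rows are u⁽²⁾∇_h u⁽³⁾ − u⁽³⁾∇_h u⁽²⁾, u⁽³⁾∇_h u⁽¹⁾ − u⁽¹⁾∇_h u⁽³⁾, and u⁽¹⁾∇_h u⁽²⁾ − u⁽²⁾∇_h u⁽¹⁾. -/
noncomputable section
open scoped BigOperators

/-- Forward difference `D⁺_j` of a scalar function on the grid ℤ³. -/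
def DpZ (h : ℝ) (u : (Fin 3 → ℤ) → ℝ) (j : Fin 3) (i : Fin 3 → ℤ) : ℝ :=
  (u (i + Pi.single j 1) - u i) / h

/-- Backward difference `D⁻_j` of a scalar function on ℤ³. -/
def DmZ (h : ℝ) (u : (Fin 3 → ℤ) → ℝ) (j : Fin 3) (i : Fin 3 → ℤ) : ℝ :=
  (u i - u (i - Pi.single j 1)) / h

/-- Discrete Laplacian `Δ_h = Σ_j D⁺_j D⁻_j` on ℤ³. -/
def laplZ (h : ℝ) (u : (Fin 3 → ℤ) → ℝ) (i : Fin 3 → ℤ) : ℝ :=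
  ∑ j, DpZ h (DmZ h u j) j i

/-- Forward divergence `Div_h v = Σ_j D⁺_j v⁽ʲ⁾` of a vector field on ℤ³. -/
def divZ (h : ℝ) (v : (Fin 3 → ℤ) → Fin 3 → ℝ) (i : Fin 3 → ℤ) : ℝ :=
  ∑ j, DpZ h (fun y => v y j) j i

/-- For `u : ℤ³ → ℝ³`, at every point, `u × Δ_h u` equals the
row-wise forward divergence of the matrix with rows
`u⁽ᵏ⁾∇_h u⁽ˡ⁾ − u⁽ˡ⁾∇_h u⁽ᵏ⁾` for cyclic pairs `(k,ℓ)`. -/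
theorem discrete_cross_laplacian_divergence_form
    (h : ℝ) (hh : 0 < h) (u : (Fin 3 → ℤ) → Fin 3 → ℝ) :
    ∀ i : Fin 3 → ℤ, ∀ r : Fin 3,
      crossProduct (u i) (fun k => laplZ h (fun y => u y k) i) r
        = divZ h (fun y j =>
            u y (r + 1) * DmZ h (fun z => u z (r + 2)) j y
              - u y (r + 2) * DmZ h (fun z => u z (r + 1)) j y) i := by
  intro i r
  have hne : h ≠ 0 := hh.ne'
  fin_cases r <;>
  · simp [crossProduct, divZ, laplZ, DpZ, DmZ, Fin.sum_univ_three,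
      add_sub_cancel_right, Fin.isValue, Matrix.cons_val_zero, Matrix.cons_val_one]
    field_simp
    ring
end
end

section
/- Let τ > 0 and define f : ℝ³ → ℝ by f(x) = (1 − (τ²/4)|x|²)/(1 + (τ²/4)|x|²). Then |f(a) − f(b)| ≤ τ |a − b| for all a, b ∈ ℝ³. -/
noncomputable section
open scoped BigOperators

lemma sq3_nonneg (v : Fin 3 → ℝ) : 0 ≤ sq3 v :=
  Finset.sum_nonneg fun i _ => sq_nonneg _

lemma enorm3_nonneg (v : Fin 3 → ℝ) : 0 ≤ enorm3 v := Real.sqrt_nonneg _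

lemma enorm3_sq (v : Fin 3 → ℝ) : enorm3 v ^ 2 = sq3 v :=
  Real.sq_sqrt (sq3_nonneg v)

lemma enorm3_eq_norm (v : Fin 3 → ℝ) :
    enorm3 v = ‖(WithLp.equiv 2 (Fin 3 → ℝ)).symm v‖ := by
  rw [EuclideanSpace.norm_eq]
  simp [enorm3, Real.norm_eq_abs, sq_abs]

lemma enorm3_sub_le (a b : Fin 3 → ℝ) :
    |enorm3 a - enorm3 b| ≤ enorm3 (a - b) := by
  have h : (WithLp.equiv 2 (Fin 3 → ℝ)).symm (a - b)
      = (WithLp.equiv 2 (Fin 3 → ℝ)).symm a - (WithLp.equiv 2 (Fin 3 → ℝ)).symm b := rfl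
  rw [enorm3_eq_norm, enorm3_eq_norm, enorm3_eq_norm, h]
  exact abs_norm_sub_norm_le _ _

lemma sq3_sub_le (a b : Fin 3 → ℝ) :
    |sq3 a - sq3 b| ≤ (enorm3 a + enorm3 b) * enorm3 (a - b) := by
  have hA := enorm3_nonneg a
  have hB := enorm3_nonneg b
  rw [← enorm3_sq a, ← enorm3_sq b]
  have : enorm3 a ^ 2 - enorm3 b ^ 2 = (enorm3 a - enorm3 b) * (enorm3 a + enorm3 b) := by ring
  rw [this, abs_mul, abs_of_nonneg (by linarith : (0:ℝ) ≤ enorm3 a + enorm3 b)]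
  rw [mul_comm (enorm3 a + enorm3 b)]
  exact mul_le_mul_of_nonneg_right (enorm3_sub_le a b) (by linarith)

/-- The scalar coefficient
`f(x) = (1 − (τ²/4)|x|²)/(1 + (τ²/4)|x|²)` of the identity matrix in the
propagation matrix `V_τ` is Lipschitz with constant `τ`. -/
theorem scalar_coefficient_lipschitz
    (τ : ℝ) (hτ : 0 < τ)
    (f : (Fin 3 → ℝ) → ℝ)
    (hf : f = fun x => (1 - τ ^ 2 / 4 * sq3 x) / (1 + τ ^ 2 / 4 * sq3 x)) :
    ∀ a b : Fin 3 → ℝ, |f a - f b| ≤ τ * enorm3 (a - b) := by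
  intro a b
  subst hf
  simp only
  set qa := sq3 a with hqa'
  set qb := sq3 b with hqb'
  have hqa : 0 ≤ qa := sq3_nonneg a
  have hqb : 0 ≤ qb := sq3_nonneg b
  have hda : 0 < 1 + τ ^ 2 / 4 * qa := by positivity
  have hdb : 0 < 1 + τ ^ 2 / 4 * qb := by positivity
  have hE : (1 - τ ^ 2 / 4 * qa) / (1 + τ ^ 2 / 4 * qa)
      - (1 - τ ^ 2 / 4 * qb) / (1 + τ ^ 2 / 4 * qb)
      = τ ^ 2 / 2 * (qb - qa) / ((1 + τ ^ 2 / 4 * qa) * (1 + τ ^ 2 / 4 * qb)) := by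
    field_simp
    ring
  rw [hE, abs_div, abs_of_pos (mul_pos hda hdb), div_le_iff₀ (mul_pos hda hdb)]
  set A := enorm3 a with hA'
  set B := enorm3 b with hB'
  set N := enorm3 (a - b) with hN'
  have hA : 0 ≤ A := enorm3_nonneg a
  have hB : 0 ≤ B := enorm3_nonneg b
  have hN : 0 ≤ N := enorm3_nonneg (a - b)
  have hqA : qa = A ^ 2 := (enorm3_sq a).symm
  have hqB : qb = B ^ 2 := (enorm3_sq b).symm
  have hsub : |qb - qa| ≤ (A + B) * N := by
    rw [abs_sub_comm]; exact sq3_sub_le a b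
  have habs : |τ ^ 2 / 2 * (qb - qa)| = τ ^ 2 / 2 * |qb - qa| := by
    rw [abs_mul, abs_of_nonneg (by positivity : (0:ℝ) ≤ τ ^ 2 / 2)]
  rw [habs]
  have h1 : τ ^ 2 / 2 * |qb - qa| ≤ τ ^ 2 / 2 * ((A + B) * N) :=
    mul_le_mul_of_nonneg_left hsub (by positivity)
  have h2 : τ ^ 2 / 2 * ((A + B) * N)
      ≤ τ * N * ((1 + τ ^ 2 / 4 * qa) * (1 + τ ^ 2 / 4 * qb)) := by
    rw [hqA, hqB]
    nlinarith [sq_nonneg (2 - τ * A), sq_nonneg (2 - τ * B), sq_nonneg (τ * A - τ * B),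
      mul_nonneg hA hB, mul_nonneg hN (mul_nonneg hA hB), sq_nonneg (τ * A * B),
      mul_nonneg (mul_nonneg hN hA) hB, mul_nonneg hτ.le hN,
      mul_nonneg (mul_nonneg hτ.le hN) (sq_nonneg (2 - τ * A)),
      mul_nonneg (mul_nonneg hτ.le hN) (sq_nonneg (2 - τ * B)),
      mul_nonneg (mul_nonneg hN (sq_nonneg (τ*A))) (sq_nonneg (τ*B))]
  linarith
end
end

section
/- Let τ > 0, let d, w, u₁, u₂ ∈ ℝ³ with |d| ≤ 1, and set ū₁ = (w + u₁)/2 and ū₂ = (w + u₂)/2. Then | (d × ū₁)/(1 + (τ²/4)|ū₁|²) − (d × ū₂)/(1 + (τ²/4)|ū₂|²) | ≤ 2 |u₁ − u₂|. -/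
noncomputable section
open scoped BigOperators

lemma enorm3_smul (a : ℝ) (v : Fin 3 → ℝ) : enorm3 (a • v) = |a| * enorm3 v := by
  rw [enorm3_eq_norm, enorm3_eq_norm]
  rw [show (WithLp.equiv 2 (Fin 3 → ℝ)).symm (a • v)
      = a • (WithLp.equiv 2 (Fin 3 → ℝ)).symm v from rfl]
  simp [norm_smul]

lemma enorm3_add_le (x y : Fin 3 → ℝ) : enorm3 (x + y) ≤ enorm3 x + enorm3 y := by
  rw [enorm3_eq_norm, enorm3_eq_norm, enorm3_eq_norm]
  rw [show (WithLp.equiv 2 (Fin 3 → ℝ)).symm (x + y)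
      = (WithLp.equiv 2 (Fin 3 → ℝ)).symm x + (WithLp.equiv 2 (Fin 3 → ℝ)).symm y from rfl]
  exact norm_add_le _ _

lemma abs_enorm3_sub_le (x y : Fin 3 → ℝ) : |enorm3 x - enorm3 y| ≤ enorm3 (x - y) := by
  rw [enorm3_eq_norm, enorm3_eq_norm, enorm3_eq_norm]
  rw [show (WithLp.equiv 2 (Fin 3 → ℝ)).symm (x - y)
      = (WithLp.equiv 2 (Fin 3 → ℝ)).symm x - (WithLp.equiv 2 (Fin 3 → ℝ)).symm y from rfl]
  exact abs_norm_sub_norm_le _ _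

lemma sq3_cross_le (u v : Fin 3 → ℝ) : sq3 (crossProduct u v) ≤ sq3 u * sq3 v := by
  simp [sq3, crossProduct, Fin.sum_univ_three]
  nlinarith [sq_nonneg (u 0 * v 0 + u 1 * v 1 + u 2 * v 2)]

lemma enorm3_cross_le (u v : Fin 3 → ℝ) :
    enorm3 (crossProduct u v) ≤ enorm3 u * enorm3 v := by
  have h1 : enorm3 (crossProduct u v) ^ 2 ≤ (enorm3 u * enorm3 v) ^ 2 := by
    rw [enorm3_sq, mul_pow, enorm3_sq, enorm3_sq]; exact sq3_cross_le u v
  have := mul_nonneg (enorm3_nonneg u) (enorm3_nonneg v)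
  nlinarith [enorm3_nonneg (crossProduct u v)]

lemma key_ineq (c n₁ n₂ : ℝ) (hc : 0 ≤ c) (h1 : 0 ≤ n₁) (h2 : 0 ≤ n₂) :
    c * n₂ * (n₁ + n₂) ≤ 2 * ((1 + c * n₁ ^ 2) * (1 + c * n₂ ^ 2)) := by
  nlinarith [mul_nonneg hc (sq_nonneg (n₁ - n₂)), mul_nonneg hc (sq_nonneg n₂),
    mul_nonneg hc (sq_nonneg n₁), sq_nonneg (c * n₁ * n₂ - 1),
    mul_nonneg (mul_nonneg hc h1) h2]

/-- Lipschitz bound for the skew part of the propagation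
matrix: with `ū_j = (w + u_j)/2` and `|d| ≤ 1`,
`|(d × ū₁)/(1 + (τ²/4)|ū₁|²) − (d × ū₂)/(1 + (τ²/4)|ū₂|²)| ≤ 2|u₁ − u₂|`. -/
theorem skew_part_lipschitz
    (τ : ℝ) (hτ : 0 < τ) (d w u₁ u₂ : Fin 3 → ℝ) (hd : enorm3 d ≤ 1)
    (ub₁ ub₂ : Fin 3 → ℝ)
    (hub₁ : ub₁ = (2 : ℝ)⁻¹ • (w + u₁)) (hub₂ : ub₂ = (2 : ℝ)⁻¹ • (w + u₂)) :
    enorm3 ((1 + τ ^ 2 / 4 * sq3 ub₁)⁻¹ • crossProduct d ub₁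
        - (1 + τ ^ 2 / 4 * sq3 ub₂)⁻¹ • crossProduct d ub₂)
      ≤ 2 * enorm3 (u₁ - u₂) := by
  set c : ℝ := τ ^ 2 / 4 with hc
  have hc0 : 0 ≤ c := by positivity
  set n₁ : ℝ := enorm3 ub₁ with hn₁
  set n₂ : ℝ := enorm3 ub₂ with hn₂
  have hn₁0 : 0 ≤ n₁ := enorm3_nonneg _
  have hn₂0 : 0 ≤ n₂ := enorm3_nonneg _
  have hs₁ : sq3 ub₁ = n₁ ^ 2 := (enorm3_sq _).symm
  have hs₂ : sq3 ub₂ = n₂ ^ 2 := (enorm3_sq _).symm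
  set A₁ : ℝ := 1 + c * sq3 ub₁ with hA₁
  set A₂ : ℝ := 1 + c * sq3 ub₂ with hA₂
  have hA₁1 : 1 ≤ A₁ := by
    have := mul_nonneg hc0 (sq3_nonneg ub₁); rw [hA₁]; linarith
  have hA₂1 : 1 ≤ A₂ := by
    have := mul_nonneg hc0 (sq3_nonneg ub₂); rw [hA₂]; linarith
  have hA₁0 : 0 < A₁ := lt_of_lt_of_le one_pos hA₁1
  have hA₂0 : 0 < A₂ := lt_of_lt_of_le one_pos hA₂1
  set δ : ℝ := enorm3 (u₁ - u₂) with hδ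
  have hδ0 : 0 ≤ δ := enorm3_nonneg _
  -- difference of the midpoints
  have hubdiff : ub₁ - ub₂ = (2 : ℝ)⁻¹ • (u₁ - u₂) := by
    rw [hub₁, hub₂]; module
  have hubnorm : enorm3 (ub₁ - ub₂) = 2⁻¹ * δ := by
    rw [hubdiff, enorm3_smul]; norm_num; rfl
  -- decomposition
  set X₁ : Fin 3 → ℝ := crossProduct d ub₁ with hX₁
  set X₂ : Fin 3 → ℝ := crossProduct d ub₂ with hX₂
  have hdecomp : A₁⁻¹ • X₁ - A₂⁻¹ • X₂
      = A₁⁻¹ • (X₁ - X₂) + (A₁⁻¹ - A₂⁻¹) • X₂ := by module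
  have hXdiff : X₁ - X₂ = crossProduct d (ub₁ - ub₂) := by
    rw [hX₁, hX₂, map_sub]
  -- first term bound
  have hterm1 : enorm3 (A₁⁻¹ • (X₁ - X₂)) ≤ 2⁻¹ * δ := by
    rw [enorm3_smul, hXdiff]
    have h1 : enorm3 (crossProduct d (ub₁ - ub₂)) ≤ 2⁻¹ * δ := by
      calc enorm3 (crossProduct d (ub₁ - ub₂))
          ≤ enorm3 d * enorm3 (ub₁ - ub₂) := enorm3_cross_le _ _
        _ ≤ 1 * (2⁻¹ * δ) := by
            rw [hubnorm]
            exact mul_le_mul hd le_rfl (by positivity) zero_le_one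
        _ = 2⁻¹ * δ := one_mul _
    have h2 : |A₁⁻¹| ≤ 1 := by
      rw [abs_of_nonneg (le_of_lt (inv_pos.mpr hA₁0))]
      exact inv_le_one_of_one_le₀ hA₁1
    calc |A₁⁻¹| * enorm3 (crossProduct d (ub₁ - ub₂))
        ≤ 1 * (2⁻¹ * δ) := mul_le_mul h2 h1 (enorm3_nonneg _) zero_le_one
      _ = 2⁻¹ * δ := one_mul _
  -- second term bound
  have hX₂norm : enorm3 X₂ ≤ n₂ := by
    calc enorm3 X₂ ≤ enorm3 d * n₂ := enorm3_cross_le _ _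
      _ ≤ 1 * n₂ := mul_le_mul_of_nonneg_right hd hn₂0
      _ = n₂ := one_mul _
  have hsdiff : |sq3 ub₁ - sq3 ub₂| ≤ (2⁻¹ * δ) * (n₁ + n₂) := by
    have h1 : |n₁ - n₂| ≤ 2⁻¹ * δ := by
      rw [← hubnorm]; exact abs_enorm3_sub_le _ _
    have h2 : sq3 ub₁ - sq3 ub₂ = (n₁ - n₂) * (n₁ + n₂) := by
      rw [hs₁, hs₂]; ring
    rw [h2, abs_mul, abs_of_nonneg (by linarith : 0 ≤ n₁ + n₂)]
    exact mul_le_mul_of_nonneg_right h1 (by linarith)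
  have hinvdiff : A₁⁻¹ - A₂⁻¹ = c * (sq3 ub₂ - sq3 ub₁) * (A₁ * A₂)⁻¹ := by
    field_simp
    rw [hA₁, hA₂]; ring
  have hterm2 : enorm3 ((A₁⁻¹ - A₂⁻¹) • X₂) ≤ δ := by
    rw [enorm3_smul]
    have habs : |A₁⁻¹ - A₂⁻¹| = c * |sq3 ub₁ - sq3 ub₂| * (A₁ * A₂)⁻¹ := by
      rw [hinvdiff, abs_mul, abs_mul, abs_of_nonneg hc0,
        abs_of_nonneg (le_of_lt (inv_pos.mpr (mul_pos hA₁0 hA₂0))), abs_sub_comm]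
    rw [habs]
    have hkey : c * n₂ * (n₁ + n₂) ≤ 2 * (A₁ * A₂) := by
      rw [hA₁, hA₂, hs₁, hs₂]
      exact key_ineq c n₁ n₂ hc0 hn₁0 hn₂0
    have hAA : (0:ℝ) < A₁ * A₂ := mul_pos hA₁0 hA₂0
    have hstep : c * |sq3 ub₁ - sq3 ub₂| * (A₁ * A₂)⁻¹ * enorm3 X₂
        ≤ c * ((2⁻¹ * δ) * (n₁ + n₂)) * (A₁ * A₂)⁻¹ * n₂ := by
      have h1 : c * |sq3 ub₁ - sq3 ub₂| ≤ c * ((2⁻¹ * δ) * (n₁ + n₂)) :=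
        mul_le_mul_of_nonneg_left hsdiff hc0
      have h2 : 0 ≤ (A₁ * A₂)⁻¹ := le_of_lt (inv_pos.mpr hAA)
      have h3 : 0 ≤ c * |sq3 ub₁ - sq3 ub₂| * (A₁ * A₂)⁻¹ := by positivity
      calc c * |sq3 ub₁ - sq3 ub₂| * (A₁ * A₂)⁻¹ * enorm3 X₂
          ≤ c * |sq3 ub₁ - sq3 ub₂| * (A₁ * A₂)⁻¹ * n₂ :=
            mul_le_mul_of_nonneg_left hX₂norm h3
        _ ≤ c * ((2⁻¹ * δ) * (n₁ + n₂)) * (A₁ * A₂)⁻¹ * n₂ := by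
            apply mul_le_mul_of_nonneg_right _ hn₂0
            exact mul_le_mul_of_nonneg_right h1 h2
    refine hstep.trans ?_
    rw [mul_comm (c * (2⁻¹ * δ * (n₁ + n₂)) * (A₁ * A₂)⁻¹) n₂, mul_comm (c * (2⁻¹ * δ * (n₁ + n₂))) (A₁ * A₂)⁻¹, ← mul_assoc, ← div_eq_mul_inv, div_mul_eq_mul_div, div_le_iff₀ hAA]
    have heq : n₂ * (c * (2⁻¹ * δ * (n₁ + n₂))) = 2⁻¹ * δ * (c * n₂ * (n₁ + n₂)) := by ring
    rw [heq]
    calc 2⁻¹ * δ * (c * n₂ * (n₁ + n₂)) ≤ 2⁻¹ * δ * (2 * (A₁ * A₂)) :=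
          mul_le_mul_of_nonneg_left hkey (by positivity)
      _ = δ * (A₁ * A₂) := by ring
  -- combine
  rw [hdecomp]
  calc enorm3 (A₁⁻¹ • (X₁ - X₂) + (A₁⁻¹ - A₂⁻¹) • X₂)
      ≤ enorm3 (A₁⁻¹ • (X₁ - X₂)) + enorm3 ((A₁⁻¹ - A₂⁻¹) • X₂) := enorm3_add_le _ _
    _ ≤ 2⁻¹ * δ + δ := add_le_add hterm1 hterm2
    _ ≤ 2 * δ := by linarith
end
end

section
/- There exists a constant C > 0 with the following property. Let M ≥ 1, h = 1/M, Δt > 0, let dᵐ : (ℤ/Mℤ)³ → ℝ³ be a grid function with |dᵐ_i| = 1 for all i, and let wᵐ : (ℤ/Mℤ)³ → ℝ³ be any grid function. Define the map F_m sending a grid function u : (ℤ/Mℤ)³ → ℝ³ to the grid function F_m(u) given by F_m(u)_i = wᵐ_i + Δt (Δ_h (V_{Δt}(ū) dᵐ))_i × (V_{Δt}(ū_i) dᵐ_i), where ū_i = (wᵐ_i + u_i)/2 and V_{Δt}(ū) dᵐ denotes the grid function i ↦ V_{Δt}(ū_i) dᵐ_i. Then for all grid functions u₁, u₂, ‖F_m(u₁)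 − F_m(u₂)‖ ≤ C (Δt²/h²) ‖u₁ − u₂‖ in the discrete L² norm. In particular, there exists κ > 0 such that whenever Δt ≤ κ h, the map F_m is a contraction and has a unique fixed point. -/
noncomputable section
open scoped BigOperators

/-- Discrete L² norm: `‖u‖ = (h³ Σ_i |u(i)|²)^(1/2)`. -/
def l2norm {M : ℕ} [NeZero M] (h : ℝ) (u : (Fin 3 → ZMod M) → Fin 3 → ℝ) : ℝ :=
  Real.sqrt (h ^ 3 * ∑ i, ∑ k, u i k ^ 2)

/-- The fixed point map `F_m` of the angular momentum method:
`F_m(u)_i = wᵐ_i + Δt (Δ_h(V_{Δt}(ū)dᵐ))_i × (V_{Δt}(ū_i)dᵐ_i)` with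
`ū_i = (wᵐ_i + u_i)/2`. -/
def Fm {M : ℕ} (h Δt : ℝ) (dm wm u : (Fin 3 → ZMod M) → Fin 3 → ℝ)
    (i : Fin 3 → ZMod M) : Fin 3 → ℝ :=
  wm i + Δt • crossProduct
    (lapl h (fun j => Vmat Δt ((2 : ℝ)⁻¹ • (wm j + u j)) (dm j)) i)
    (Vmat Δt ((2 : ℝ)⁻¹ • (wm i + u i)) (dm i))

lemma sq3_expand (v : Fin 3 → ℝ) : sq3 v = v 0 ^2 + v 1 ^2 + v 2 ^2 := by
  simp [sq3, Fin.sum_univ_three]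

lemma cross0 (a b : Fin 3 → ℝ) : crossProduct a b 0 = a 1 * b 2 - a 2 * b 1 := by
  simp [cross_apply]
lemma cross1 (a b : Fin 3 → ℝ) : crossProduct a b 1 = a 2 * b 0 - a 0 * b 2 := by
  simp [cross_apply]
lemma cross2 (a b : Fin 3 → ℝ) : crossProduct a b 2 = a 0 * b 1 - a 1 * b 0 := by
  simp [cross_apply]

lemma Vmat_apply (τ : ℝ) (w d : Fin 3 → ℝ) (k : Fin 3) :
    Vmat τ w d k = (1 + τ ^ 2 / 4 * sq3 w)⁻¹ *
      ((1 - τ ^ 2 / 4 * sq3 w) * d k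
        + (τ ^ 2 / 2 * (w 0 * d 0 + w 1 * d 1 + w 2 * d 2)) * w k
        + τ * crossProduct d w k) := by
  simp [Vmat, Fin.sum_univ_three]

lemma denom_pos (τ : ℝ) (w : Fin 3 → ℝ) : (0:ℝ) < 1 + τ ^ 2 / 4 * sq3 w := by
  have := sq3_nonneg w; positivity

lemma Vmat_id (τ : ℝ) (w d : Fin 3 → ℝ) :
    Vmat τ w d - (τ/2) • crossProduct (Vmat τ w d) w = d + (τ/2) • crossProduct d w := by
  have hc := denom_pos τ w
  have hc' : (1 + τ ^ 2 / 4 * (w 0 ^2 + w 1 ^2 + w 2 ^2)) ≠ 0 := by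
    rw [← sq3_expand]; exact ne_of_gt hc
  have h0 : (Vmat τ w d - (τ/2) • crossProduct (Vmat τ w d) w) 0
      = (d + (τ/2) • crossProduct d w) 0 := by
    simp only [Pi.sub_apply, Pi.add_apply, Pi.smul_apply, smul_eq_mul,
      cross0, cross1, cross2, Vmat_apply, sq3_expand]
    field_simp; ring
  have h1 : (Vmat τ w d - (τ/2) • crossProduct (Vmat τ w d) w) 1
      = (d + (τ/2) • crossProduct d w) 1 := by
    simp only [Pi.sub_apply, Pi.add_apply, Pi.smul_apply, smul_eq_mul,
      cross0, cross1, cross2, Vmat_apply, sq3_expand]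
    field_simp; ring
  have h2 : (Vmat τ w d - (τ/2) • crossProduct (Vmat τ w d) w) 2
      = (d + (τ/2) • crossProduct d w) 2 := by
    simp only [Pi.sub_apply, Pi.add_apply, Pi.smul_apply, smul_eq_mul,
      cross0, cross1, cross2, Vmat_apply, sq3_expand]
    field_simp; ring
  funext k; fin_cases k
  · exact h0
  · exact h1
  · exact h2

lemma Vmat_sq (τ : ℝ) (w d : Fin 3 → ℝ) : sq3 (Vmat τ w d) = sq3 d := by
  have hc := denom_pos τ w
  have hc' : (1 + τ ^ 2 / 4 * (w 0 ^2 + w 1 ^2 + w 2 ^2)) ≠ 0 := by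
    rw [← sq3_expand]; exact ne_of_gt hc
  rw [sq3_expand (Vmat τ w d), sq3_expand d]
  simp only [Vmat_apply, cross0, cross1, cross2, sq3_expand]
  field_simp; ring

lemma cross_sq_le (a b : Fin 3 → ℝ) : sq3 (crossProduct a b) ≤ sq3 a * sq3 b := by
  rw [sq3_expand, sq3_expand, sq3_expand, cross0, cross1, cross2]
  nlinarith [sq_nonneg (a 0 * b 0 + a 1 * b 1 + a 2 * b 2)]

lemma sq3_smul (c : ℝ) (v : Fin 3 → ℝ) : sq3 (c • v) = c^2 * sq3 v := by
  simp [sq3_expand]; ring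

lemma sq3_add_le (x y : Fin 3 → ℝ) : sq3 (x + y) ≤ 2 * sq3 x + 2 * sq3 y := by
  simp only [sq3_expand, Pi.add_apply]
  nlinarith [sq_nonneg (x 0 - y 0), sq_nonneg (x 1 - y 1), sq_nonneg (x 2 - y 2)]

lemma cross_orth_sq (t : ℝ) (v w : Fin 3 → ℝ) :
    sq3 (v - t • crossProduct v w) = sq3 v + t^2 * sq3 (crossProduct v w) := by
  simp only [sq3_expand, Pi.sub_apply, Pi.smul_apply, smul_eq_mul, cross0, cross1, cross2]
  ring

lemma vlip (τ : ℝ) (w w' d : Fin 3 → ℝ) (hd : sq3 d = 1) :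
    sq3 (Vmat τ w d - Vmat τ w' d) ≤ τ^2 * sq3 (w - w') := by
  set a := Vmat τ w d with ha
  set b := Vmat τ w' d with hb
  have Ha := Vmat_id τ w d
  have Hb := Vmat_id τ w' d
  have E : (a - b) - (τ/2) • crossProduct (a - b) w
      = (τ/2) • crossProduct (b + d) (w - w') := by
    have l1 : crossProduct (a - b) w = crossProduct a w - crossProduct b w := by
      rw [map_sub]; rfl
    have l2 : crossProduct b (w - w') = crossProduct b w - crossProduct b w' := map_sub _ _ _
    have l3 : crossProduct d (w - w') = crossProduct d w - crossProduct d w' := map_sub _ _ _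
    have l4 : crossProduct (b + d) (w - w') = crossProduct b (w - w') + crossProduct d (w - w') := by
      rw [map_add]; rfl
    have key : (a - (τ/2) • crossProduct a w) - (b - (τ/2) • crossProduct b w')
        = (d + (τ/2) • crossProduct d w) - (d + (τ/2) • crossProduct d w') := by
      rw [Ha, Hb]
    rw [l4, l2, l3, l1]
    have : a - b - (τ / 2) • (crossProduct a w - crossProduct b w)
        = (a - (τ/2) • crossProduct a w) - (b - (τ/2) • crossProduct b w') +
          (τ/2) • (crossProduct b w - crossProduct b w') := by module
    rw [this, key]
    module
  have h1 : sq3 ((a - b) - (τ/2) • crossProduct (a - b) w)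
      = sq3 (a - b) + (τ/2)^2 * sq3 (crossProduct (a - b) w) := cross_orth_sq _ _ _
  have h2 : sq3 ((τ/2) • crossProduct (b + d) (w - w'))
      = (τ/2)^2 * sq3 (crossProduct (b + d) (w - w')) := sq3_smul _ _
  have h3 : sq3 (crossProduct (b + d) (w - w')) ≤ sq3 (b + d) * sq3 (w - w') :=
    cross_sq_le _ _
  have h4 : sq3 (b + d) ≤ 4 := by
    have := sq3_add_le b d
    rw [hb, Vmat_sq, hd] at this
    linarith
  have h5 : 0 ≤ sq3 (crossProduct (a - b) w) := sq3_nonneg _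
  have h6 : 0 ≤ sq3 (w - w') := sq3_nonneg _
  have hE : sq3 (a - b) + (τ/2)^2 * sq3 (crossProduct (a - b) w)
      = (τ/2)^2 * sq3 (crossProduct (b + d) (w - w')) := by
    rw [← h1, E, h2]
  have c1 : sq3 (crossProduct (b + d) (w - w')) ≤ 4 * sq3 (w - w') :=
    le_trans h3 (mul_le_mul_of_nonneg_right h4 h6)
  have c2 : (τ/2)^2 * sq3 (crossProduct (b + d) (w - w')) ≤ (τ/2)^2 * (4 * sq3 (w - w')) :=
    mul_le_mul_of_nonneg_left c1 (sq_nonneg _)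
  have c3 : (τ/2)^2 * (4 * sq3 (w - w')) = τ^2 * sq3 (w - w') := by ring
  have c4 : 0 ≤ (τ/2)^2 * sq3 (crossProduct (a - b) w) := mul_nonneg (sq_nonneg _) h5
  linarith

lemma cross_diff (A₁ A₂ B₁ B₂ : Fin 3 → ℝ) :
    crossProduct A₁ B₁ - crossProduct A₂ B₂
      = crossProduct (A₁ - A₂) B₁ + crossProduct A₂ (B₁ - B₂) := by
  have l1 : crossProduct (A₁ - A₂) B₁ = crossProduct A₁ B₁ - crossProduct A₂ B₁ := by
    rw [map_sub]; rfl
  have l2 : crossProduct A₂ (B₁ - B₂) = crossProduct A₂ B₁ - crossProduct A₂ B₂ := map_sub _ _ _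
  rw [l1, l2]; abel

/-! ### Grid level lemmas -/

lemma lapl_eq {M : ℕ} (h : ℝ) (u : (Fin 3 → ZMod M) → Fin 3 → ℝ) (i : Fin 3 → ZMod M) :
    lapl h u i = (h⁻¹ * h⁻¹) •
      ((∑ j : Fin 3, (u (i + Pi.single j 1) + u (i - Pi.single j 1))) - (6:ℝ) • u i) := by
  funext k
  simp only [lapl, Dp, Dm, Finset.sum_apply, Pi.smul_apply, Pi.sub_apply, Pi.add_apply,
    smul_eq_mul, add_sub_cancel_right, Fin.sum_univ_three]
  ring

lemma lapl_sub {M : ℕ} (h : ℝ) (x y : (Fin 3 → ZMod M) → Fin 3 → ℝ) (i : Fin 3 → ZMod M) :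
    lapl h (fun j => x j - y j) i = lapl h x i - lapl h y i := by
  funext k
  simp only [lapl, Dp, Dm, Finset.sum_apply, Pi.smul_apply, Pi.sub_apply, Pi.add_apply,
    Pi.neg_apply, smul_eq_mul, Fin.sum_univ_three]
  ring

lemma key7 (a b c d e f g : ℝ) :
    (a+b+c+d+e+f-6*g)^2 ≤ 42*(a^2+b^2+c^2+d^2+e^2+f^2+g^2) := by
  nlinarith [sq_nonneg (a-b), sq_nonneg (a-c), sq_nonneg (a-d), sq_nonneg (a-e), sq_nonneg (a-f),
    sq_nonneg (b-c), sq_nonneg (b-d), sq_nonneg (b-e), sq_nonneg (b-f),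
    sq_nonneg (c-d), sq_nonneg (c-e), sq_nonneg (c-f),
    sq_nonneg (d-e), sq_nonneg (d-f), sq_nonneg (e-f),
    sq_nonneg (g+6*a), sq_nonneg (g+6*b), sq_nonneg (g+6*c), sq_nonneg (g+6*d),
    sq_nonneg (g+6*e), sq_nonneg (g+6*f)]

lemma sq3_stencil (p q r s t v g : Fin 3 → ℝ) :
    sq3 (p+q+r+s+t+v - (6:ℝ)•g)
      ≤ 42 * (sq3 p + sq3 q + sq3 r + sq3 s + sq3 t + sq3 v + sq3 g) := by
  simp only [sq3_expand, Pi.add_apply, Pi.sub_apply, Pi.smul_apply, smul_eq_mul]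
  have h0 := key7 (p 0) (q 0) (r 0) (s 0) (t 0) (v 0) (g 0)
  have h1 := key7 (p 1) (q 1) (r 1) (s 1) (t 1) (v 1) (g 1)
  have h2 := key7 (p 2) (q 2) (r 2) (s 2) (t 2) (v 2) (g 2)
  linarith

lemma sq3_lapl_le {M : ℕ} (h : ℝ) (u : (Fin 3 → ZMod M) → Fin 3 → ℝ) (i : Fin 3 → ZMod M) :
    sq3 (lapl h u i) ≤ 42 * (h⁻¹*h⁻¹)^2 *
      ((∑ j : Fin 3, (sq3 (u (i + Pi.single j 1)) + sq3 (u (i - Pi.single j 1)))) + sq3 (u i)) := by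
  have e1 : sq3 (lapl h u i) = (h⁻¹*h⁻¹)^2 *
      sq3 ((∑ j : Fin 3, (u (i + Pi.single j 1) + u (i - Pi.single j 1))) - (6:ℝ) • u i) := by
    rw [lapl_eq]
    simp only [sq3_expand, Pi.smul_apply, smul_eq_mul]
    ring
  rw [e1]
  have e2 : (∑ j : Fin 3, (u (i + Pi.single j 1) + u (i - Pi.single j 1)))
      = u (i + Pi.single 0 1) + u (i - Pi.single 0 1) + u (i + Pi.single 1 1)
        + u (i - Pi.single 1 1) + u (i + Pi.single 2 1) + u (i - Pi.single 2 1) := by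
    rw [Fin.sum_univ_three]; abel
  rw [e2]
  have := sq3_stencil (u (i + Pi.single 0 1)) (u (i - Pi.single 0 1)) (u (i + Pi.single 1 1))
    (u (i - Pi.single 1 1)) (u (i + Pi.single 2 1)) (u (i - Pi.single 2 1)) (u i)
  have hK : (0:ℝ) ≤ (h⁻¹*h⁻¹)^2 := sq_nonneg _
  calc (h⁻¹*h⁻¹)^2 * sq3 (u (i + Pi.single 0 1) + u (i - Pi.single 0 1) + u (i + Pi.single 1 1)
        + u (i - Pi.single 1 1) + u (i + Pi.single 2 1) + u (i - Pi.single 2 1) - (6:ℝ) • u i)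
      ≤ (h⁻¹*h⁻¹)^2 * (42 * (sq3 (u (i + Pi.single 0 1)) + sq3 (u (i - Pi.single 0 1))
          + sq3 (u (i + Pi.single 1 1)) + sq3 (u (i - Pi.single 1 1))
          + sq3 (u (i + Pi.single 2 1)) + sq3 (u (i - Pi.single 2 1)) + sq3 (u i))) :=
        mul_le_mul_of_nonneg_left this hK
    _ = 42 * (h⁻¹*h⁻¹)^2 *
      ((∑ j : Fin 3, (sq3 (u (i + Pi.single j 1)) + sq3 (u (i - Pi.single j 1)))) + sq3 (u i)) := by
        rw [Fin.sum_univ_three]; ring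

lemma sum_shift_add {M : ℕ} [NeZero M] (f : (Fin 3 → ZMod M) → ℝ) (p : Fin 3 → ZMod M) :
    ∑ i, f (i + p) = ∑ i, f i :=
  Fintype.sum_equiv (Equiv.addRight p) _ _ (fun _ => rfl)

lemma sum_shift_sub {M : ℕ} [NeZero M] (f : (Fin 3 → ZMod M) → ℝ) (p : Fin 3 → ZMod M) :
    ∑ i, f (i - p) = ∑ i, f i :=
  Fintype.sum_equiv (Equiv.subRight p) _ _ (fun _ => rfl)

lemma lapl_sum_le {M : ℕ} [NeZero M] (h : ℝ) (u : (Fin 3 → ZMod M) → Fin 3 → ℝ) :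
    ∑ i, sq3 (lapl h u i) ≤ 294 * (h⁻¹*h⁻¹)^2 * ∑ i, sq3 (u i) := by
  calc ∑ i, sq3 (lapl h u i)
      ≤ ∑ i, 42 * (h⁻¹*h⁻¹)^2 *
        ((∑ j : Fin 3, (sq3 (u (i + Pi.single j 1)) + sq3 (u (i - Pi.single j 1)))) + sq3 (u i)) :=
        Finset.sum_le_sum fun i _ => sq3_lapl_le h u i
    _ = 42 * (h⁻¹*h⁻¹)^2 *
        (∑ i, ((∑ j : Fin 3, (sq3 (u (i + Pi.single j 1)) + sq3 (u (i - Pi.single j 1)))) + sq3 (u i))) := by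
        rw [Finset.mul_sum]
    _ = 294 * (h⁻¹*h⁻¹)^2 * ∑ i, sq3 (u i) := by
        have : ∑ i, ((∑ j : Fin 3, (sq3 (u (i + Pi.single j 1)) + sq3 (u (i - Pi.single j 1)))) + sq3 (u i))
            = 7 * ∑ i, sq3 (u i) := by
          have hs : ∀ p : Fin 3 → ZMod M,
              ∑ i, (sq3 (u (i + p)) + sq3 (u (i - p))) = 2 * ∑ i, sq3 (u i) := by
            intro p
            have h1 := sum_shift_add (fun i => sq3 (u i)) p
            have h2 := sum_shift_sub (fun i => sq3 (u i)) p
            rw [Finset.sum_add_distrib, h1, h2]; ring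
          rw [Finset.sum_add_distrib, Finset.sum_comm]
          simp only [hs]
          rw [Fin.sum_univ_three]
          ring
        rw [this]; ring

lemma sq3_lapl_pt_le {M : ℕ} (h : ℝ) (u : (Fin 3 → ZMod M) → Fin 3 → ℝ) (i : Fin 3 → ZMod M)
    (hu : ∀ j, sq3 (u j) = 1) :
    sq3 (lapl h u i) ≤ 294 * (h⁻¹*h⁻¹)^2 := by
  have := sq3_lapl_le h u i
  simp only [hu] at this
  calc sq3 (lapl h u i) ≤ _ := this
    _ = 294 * (h⁻¹*h⁻¹)^2 := by rw [Fin.sum_univ_three]; ring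

/-- The main summed estimate. -/
lemma main_sum {M : ℕ} [NeZero M] (h Δt : ℝ)
    (dm wm u₁ u₂ : (Fin 3 → ZMod M) → Fin 3 → ℝ) (hd : ∀ i, sq3 (dm i) = 1) :
    ∑ i, sq3 ((Fm h Δt dm wm u₁ - Fm h Δt dm wm u₂) i)
      ≤ 294 * Δt^4 * (h⁻¹*h⁻¹)^2 * ∑ i, sq3 ((u₁ - u₂) i) := by
  set V₁ : (Fin 3 → ZMod M) → Fin 3 → ℝ :=
    fun j => Vmat Δt ((2 : ℝ)⁻¹ • (wm j + u₁ j)) (dm j) with hV₁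
  set V₂ : (Fin 3 → ZMod M) → Fin 3 → ℝ :=
    fun j => Vmat Δt ((2 : ℝ)⁻¹ • (wm j + u₂ j)) (dm j) with hV₂
  set g : (Fin 3 → ZMod M) → Fin 3 → ℝ := fun j => V₁ j - V₂ j with hg
  have hV₁sq : ∀ j, sq3 (V₁ j) = 1 := fun j => by rw [hV₁]; exact (Vmat_sq _ _ _).trans (hd j)
  have hV₂sq : ∀ j, sq3 (V₂ j) = 1 := fun j => by rw [hV₂]; exact (Vmat_sq _ _ _).trans (hd j)
  have hgpt : ∀ i, sq3 (g i) ≤ Δt^2 * 4⁻¹ * sq3 ((u₁ - u₂) i) := by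
    intro i
    have hvv : (2 : ℝ)⁻¹ • (wm i + u₁ i) - (2 : ℝ)⁻¹ • (wm i + u₂ i)
        = (2 : ℝ)⁻¹ • (u₁ i - u₂ i) := by module
    have := vlip Δt ((2 : ℝ)⁻¹ • (wm i + u₁ i)) ((2 : ℝ)⁻¹ • (wm i + u₂ i)) (dm i) (hd i)
    rw [hvv, sq3_smul] at this
    calc sq3 (g i) ≤ Δt^2 * (((2:ℝ)⁻¹)^2 * sq3 (u₁ i - u₂ i)) := this
      _ = Δt^2 * 4⁻¹ * sq3 ((u₁ - u₂) i) := by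
          rw [show (u₁ - u₂) i = u₁ i - u₂ i from rfl]; ring
  have hF : ∀ i, (Fm h Δt dm wm u₁ - Fm h Δt dm wm u₂) i
      = Δt • (crossProduct (lapl h g i) (V₁ i) + crossProduct (lapl h V₂ i) (g i)) := by
    intro i
    show Fm h Δt dm wm u₁ i - Fm h Δt dm wm u₂ i = _
    rw [Fm, Fm]
    rw [show (fun j => Vmat Δt ((2 : ℝ)⁻¹ • (wm j + u₁ j)) (dm j)) = V₁ from rfl,
      show (fun j => Vmat Δt ((2 : ℝ)⁻¹ • (wm j + u₂ j)) (dm j)) = V₂ from rfl]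
    rw [show Vmat Δt ((2 : ℝ)⁻¹ • (wm i + u₁ i)) (dm i) = V₁ i from rfl,
      show Vmat Δt ((2 : ℝ)⁻¹ • (wm i + u₂ i)) (dm i) = V₂ i from rfl]
    have e1 : wm i + Δt • crossProduct (lapl h V₁ i) (V₁ i)
        - (wm i + Δt • crossProduct (lapl h V₂ i) (V₂ i))
        = Δt • (crossProduct (lapl h V₁ i) (V₁ i) - crossProduct (lapl h V₂ i) (V₂ i)) := by
      module
    rw [e1, cross_diff]
    have e2 : lapl h V₁ i - lapl h V₂ i = lapl h g i := by
      rw [hg]; exact (lapl_sub h V₁ V₂ i).symm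
    rw [e2]
  have hpt : ∀ i, sq3 ((Fm h Δt dm wm u₁ - Fm h Δt dm wm u₂) i)
      ≤ 2 * Δt^2 * (sq3 (lapl h g i) + 294 * (h⁻¹*h⁻¹)^2 * sq3 (g i)) := by
    intro i
    rw [hF i, sq3_smul]
    have t1 := sq3_add_le (crossProduct (lapl h g i) (V₁ i)) (crossProduct (lapl h V₂ i) (g i))
    have t2 : sq3 (crossProduct (lapl h g i) (V₁ i)) ≤ sq3 (lapl h g i) := by
      have := cross_sq_le (lapl h g i) (V₁ i)
      rw [hV₁sq i] at this; linarith [this]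
    have t3 : sq3 (crossProduct (lapl h V₂ i) (g i)) ≤ 294 * (h⁻¹*h⁻¹)^2 * sq3 (g i) := by
      have c := cross_sq_le (lapl h V₂ i) (g i)
      have b := sq3_lapl_pt_le h V₂ i hV₂sq
      have := mul_le_mul_of_nonneg_right b (sq3_nonneg (g i))
      linarith
    have chain : sq3 (crossProduct (lapl h g i) (V₁ i) + crossProduct (lapl h V₂ i) (g i))
        ≤ 2 * (sq3 (lapl h g i) + 294 * (h⁻¹*h⁻¹)^2 * sq3 (g i)) := by linarith
    have := mul_le_mul_of_nonneg_left chain (sq_nonneg Δt)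
    linarith [this]
  have hsum1 : ∑ i, sq3 ((Fm h Δt dm wm u₁ - Fm h Δt dm wm u₂) i)
      ≤ 2 * Δt^2 * ((∑ i, sq3 (lapl h g i)) + 294 * (h⁻¹*h⁻¹)^2 * ∑ i, sq3 (g i)) := by
    calc ∑ i, sq3 ((Fm h Δt dm wm u₁ - Fm h Δt dm wm u₂) i)
        ≤ ∑ i, (2 * Δt^2 * sq3 (lapl h g i)
            + (2 * Δt^2 * (294 * (h⁻¹*h⁻¹)^2)) * sq3 (g i)) :=
          Finset.sum_le_sum fun i _ => (hpt i).trans_eq (by ring)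
      _ = 2 * Δt^2 * ((∑ i, sq3 (lapl h g i)) + 294 * (h⁻¹*h⁻¹)^2 * ∑ i, sq3 (g i)) := by
          rw [Finset.sum_add_distrib, ← Finset.mul_sum, ← Finset.mul_sum]
          ring
  have hsum2 : ∑ i, sq3 (lapl h g i) ≤ 294 * (h⁻¹*h⁻¹)^2 * ∑ i, sq3 (g i) := lapl_sum_le h g
  have hsum3 : ∑ i, sq3 (g i) ≤ Δt^2 * 4⁻¹ * ∑ i, sq3 ((u₁ - u₂) i) := by
    calc ∑ i, sq3 (g i) ≤ ∑ i, Δt^2 * 4⁻¹ * sq3 ((u₁ - u₂) i) :=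
        Finset.sum_le_sum fun i _ => hgpt i
      _ = Δt^2 * 4⁻¹ * ∑ i, sq3 ((u₁ - u₂) i) := by rw [Finset.mul_sum]
  have hKnn : (0:ℝ) ≤ (h⁻¹*h⁻¹)^2 := sq_nonneg _
  have hgnn : (0:ℝ) ≤ ∑ i, sq3 (g i) := Finset.sum_nonneg fun i _ => sq3_nonneg _
  have hDnn : (0:ℝ) ≤ Δt^2 := sq_nonneg _
  have step1 : 2 * Δt^2 * ((∑ i, sq3 (lapl h g i)) + 294 * (h⁻¹*h⁻¹)^2 * ∑ i, sq3 (g i))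
      ≤ 2 * Δt^2 * (2 * (294 * (h⁻¹*h⁻¹)^2 * ∑ i, sq3 (g i))) := by
    apply mul_le_mul_of_nonneg_left _ (by positivity)
    linarith
  have step2 : 2 * Δt^2 * (2 * (294 * (h⁻¹*h⁻¹)^2 * ∑ i, sq3 (g i)))
      ≤ 2 * Δt^2 * (2 * (294 * (h⁻¹*h⁻¹)^2 * (Δt^2 * 4⁻¹ * ∑ i, sq3 ((u₁ - u₂) i)))) := by
    apply mul_le_mul_of_nonneg_left _ (by positivity)
    apply mul_le_mul_of_nonneg_left _ (by norm_num)
    exact mul_le_mul_of_nonneg_left hsum3 (by positivity)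
  have : 2 * Δt^2 * (2 * (294 * (h⁻¹*h⁻¹)^2 * (Δt^2 * 4⁻¹ * ∑ i, sq3 ((u₁ - u₂) i))))
      = 294 * Δt^4 * (h⁻¹*h⁻¹)^2 * ∑ i, sq3 ((u₁ - u₂) i) := by ring
  linarith

/-! ### L² norm lemmas and the contraction argument -/

lemma l2norm_eq {M : ℕ} [NeZero M] (h : ℝ) (u : (Fin 3 → ZMod M) → Fin 3 → ℝ) :
    l2norm h u = Real.sqrt (h ^ 3 * ∑ i, sq3 (u i)) := rfl

lemma l2norm_nonneg {M : ℕ} [NeZero M] (h : ℝ) (u : (Fin 3 → ZMod M) → Fin 3 → ℝ) :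
    0 ≤ l2norm h u := Real.sqrt_nonneg _

lemma l2norm_eq_zero {M : ℕ} [NeZero M] {h : ℝ} (hh : 0 < h)
    {u : (Fin 3 → ZMod M) → Fin 3 → ℝ} (hu : l2norm h u = 0) : u = 0 := by
  rw [l2norm_eq] at hu
  have hS : 0 ≤ ∑ i, sq3 (u i) := Finset.sum_nonneg fun i _ => sq3_nonneg _
  have h3 : (0:ℝ) < h ^ 3 := by positivity
  have := (Real.sqrt_eq_zero' ).mp hu
  have hS0 : ∑ i, sq3 (u i) = 0 := by
    rcases this with hle
    nlinarith
  funext i k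
  have hterm : sq3 (u i) = 0 := by
    have := (Finset.sum_eq_zero_iff_of_nonneg (fun i _ => sq3_nonneg (u i))).mp hS0 i
      (Finset.mem_univ i)
    exact this
  have : u i k ^ 2 = 0 := by
    have := (Finset.sum_eq_zero_iff_of_nonneg (fun k _ => sq_nonneg (u i k))).mp hterm k
      (Finset.mem_univ k)
    exact this
  simpa using pow_eq_zero_iff (n := 2) (by norm_num) |>.mp this

/-- Lipschitz estimate in l2norm. -/
lemma Fm_l2_lip {M : ℕ} [NeZero M] {h : ℝ} (hh : 0 < h) (Δt : ℝ)
    (dm wm : (Fin 3 → ZMod M) → Fin 3 → ℝ) (hd : ∀ i, sq3 (dm i) = 1)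
    (u₁ u₂ : (Fin 3 → ZMod M) → Fin 3 → ℝ) :
    l2norm h (Fm h Δt dm wm u₁ - Fm h Δt dm wm u₂)
      ≤ 18 * (Δt ^ 2 / h ^ 2) * l2norm h (u₁ - u₂) := by
  have key := main_sum h Δt dm wm u₁ u₂ hd
  have hc : (0:ℝ) ≤ 18 * (Δt ^ 2 / h ^ 2) := by positivity
  have heq : 294 * Δt^4 * (h⁻¹*h⁻¹)^2 ≤ (18 * (Δt ^ 2 / h ^ 2))^2 := by
    have h2 : (0:ℝ) < h^2 := by positivity
    have : (h⁻¹*h⁻¹)^2 = (1/h^2)^2 := by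
      rw [one_div, ← mul_inv, ← sq]
    rw [this]
    have e : (18 * (Δt ^ 2 / h ^ 2))^2 = 324 * Δt^4 * (1/h^2)^2 := by ring
    rw [e]
    have : (0:ℝ) ≤ Δt^4 * (1/h^2)^2 := by positivity
    nlinarith
  have hSu : (0:ℝ) ≤ ∑ i, sq3 ((u₁ - u₂) i) := Finset.sum_nonneg fun i _ => sq3_nonneg _
  have key2 : ∑ i, sq3 ((Fm h Δt dm wm u₁ - Fm h Δt dm wm u₂) i)
      ≤ (18 * (Δt ^ 2 / h ^ 2))^2 * ∑ i, sq3 ((u₁ - u₂) i) := by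
    calc ∑ i, sq3 ((Fm h Δt dm wm u₁ - Fm h Δt dm wm u₂) i)
        ≤ 294 * Δt^4 * (h⁻¹*h⁻¹)^2 * ∑ i, sq3 ((u₁ - u₂) i) := key
      _ ≤ (18 * (Δt ^ 2 / h ^ 2))^2 * ∑ i, sq3 ((u₁ - u₂) i) :=
          mul_le_mul_of_nonneg_right heq hSu
  rw [l2norm_eq, l2norm_eq]
  have h3 : (0:ℝ) ≤ h ^ 3 := by positivity
  have step : h ^ 3 * ∑ i, sq3 ((Fm h Δt dm wm u₁ - Fm h Δt dm wm u₂) i)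
      ≤ (18 * (Δt ^ 2 / h ^ 2))^2 * (h ^ 3 * ∑ i, sq3 ((u₁ - u₂) i)) := by
    have := mul_le_mul_of_nonneg_left key2 h3
    nlinarith [this]
  calc Real.sqrt (h ^ 3 * ∑ i, sq3 ((Fm h Δt dm wm u₁ - Fm h Δt dm wm u₂) i))
      ≤ Real.sqrt ((18 * (Δt ^ 2 / h ^ 2))^2 * (h ^ 3 * ∑ i, sq3 ((u₁ - u₂) i))) :=
        Real.sqrt_le_sqrt step
    _ = 18 * (Δt ^ 2 / h ^ 2) * Real.sqrt (h ^ 3 * ∑ i, sq3 ((u₁ - u₂) i)) := by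
        rw [Real.sqrt_mul (sq_nonneg _), Real.sqrt_sq hc]

/-- Existence and uniqueness of a fixed point for an `l2norm`-contraction. -/
lemma l2_contraction_fixed {M : ℕ} [NeZero M] {h : ℝ} (hh : 0 < h)
    (F : ((Fin 3 → ZMod M) → Fin 3 → ℝ) → ((Fin 3 → ZMod M) → Fin 3 → ℝ))
    (K : ℝ) (hK0 : 0 ≤ K) (hK : K < 1)
    (hlip : ∀ u v, l2norm h (F u - F v) ≤ K * l2norm h (u - v)) :
    ∃! u, F u = u := by
  set ι := ((Fin 3 → ZMod M) × Fin 3)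
  set E := EuclideanSpace ℝ ι
  let φ : ((Fin 3 → ZMod M) → Fin 3 → ℝ) → E :=
    fun u => (WithLp.equiv 2 (ι → ℝ)).symm (fun p => u p.1 p.2)
  let ψ : E → ((Fin 3 → ZMod M) → Fin 3 → ℝ) :=
    fun x i k => (WithLp.equiv 2 (ι → ℝ)) x (i, k)
  have hψφ : ∀ u, ψ (φ u) = u := fun u => rfl
  have hφψ : ∀ x, φ (ψ x) = x := fun x => rfl
  have hdist : ∀ u v, l2norm h (u - v) = Real.sqrt (h ^ 3) * dist (φ u) (φ v) := by
    intro u v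
    rw [l2norm_eq, EuclideanSpace.dist_eq]
    have e1 : ∑ p : ι, dist (φ u p) (φ v p) ^ 2 = ∑ i, sq3 ((u - v) i) := by
      rw [Fintype.sum_prod_type]
      refine Finset.sum_congr rfl fun i _ => ?_
      refine Finset.sum_congr rfl fun k _ => ?_
      rw [Real.dist_eq, sq_abs]
      rfl
    rw [e1, ← Real.sqrt_mul (by positivity)]
  have hsq3 : (0:ℝ) < Real.sqrt (h ^ 3) := Real.sqrt_pos.mpr (by positivity)
  let f : E → E := fun x => φ (F (ψ x))
  have hKnn : (⟨K, hK0⟩ : NNReal) < 1 := by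
    exact hK
  have hlipf : LipschitzWith ⟨K, hK0⟩ f := by
    apply LipschitzWith.of_dist_le_mul
    intro x y
    have h1 : Real.sqrt (h ^ 3) * dist (f x) (f y) = l2norm h (F (ψ x) - F (ψ y)) := by
      rw [hdist (F (ψ x)) (F (ψ y))]
    have h2 : l2norm h (ψ x - ψ y) = Real.sqrt (h ^ 3) * dist x y := by
      have := hdist (ψ x) (ψ y)
      rw [hφψ x, hφψ y] at this
      exact this
    have h3 := hlip (ψ x) (ψ y)
    rw [← h1, h2] at h3
    have : Real.sqrt (h ^ 3) * dist (f x) (f y) ≤ Real.sqrt (h ^ 3) * (K * dist x y) := by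
      calc Real.sqrt (h ^ 3) * dist (f x) (f y) ≤ K * (Real.sqrt (h ^ 3) * dist x y) := h3
        _ = Real.sqrt (h ^ 3) * (K * dist x y) := by ring
    have := le_of_mul_le_mul_left this hsq3
    exact this
  have hC : ContractingWith ⟨K, hK0⟩ f := ⟨hKnn, hlipf⟩
  have hne : Nonempty E := ⟨0⟩
  let x₀ := hC.fixedPoint f
  have hfix : f x₀ = x₀ := hC.fixedPoint_isFixedPt
  refine ⟨ψ x₀, ?_, ?_⟩
  · have : φ (F (ψ x₀)) = x₀ := hfix
    calc F (ψ x₀) = ψ (φ (F (ψ x₀))) := (hψφ _).symm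
      _ = ψ x₀ := by rw [this]
  · intro v hv
    -- uniqueness
    by_contra hne'
    have hvx : F v = v := hv
    have hx : F (ψ x₀) = ψ x₀ := by
      have : φ (F (ψ x₀)) = x₀ := hfix
      calc F (ψ x₀) = ψ (φ (F (ψ x₀))) := (hψφ _).symm
        _ = ψ x₀ := by rw [this]
    have h1 : l2norm h (v - ψ x₀) ≤ K * l2norm h (v - ψ x₀) := by
      have := hlip v (ψ x₀)
      rw [hvx, hx] at this
      exact this
    have h2 : 0 ≤ l2norm h (v - ψ x₀) := l2norm_nonneg _ _
    have h3 : l2norm h (v - ψ x₀) = 0 := by nlinarith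
    have := l2norm_eq_zero hh h3
    exact hne' (sub_eq_zero.mp this)

lemma enorm3_one_sq3 {v : Fin 3 → ℝ} (hv : enorm3 v = 1) : sq3 v = 1 := by
  have h1 : Real.sqrt (sq3 v) = 1 := hv
  have h2 : 0 ≤ sq3 v := sq3_nonneg v
  nlinarith [Real.sq_sqrt h2, h1]

/-- There is a constant `C > 0` such that for every grid,
every `Δt > 0`, every unit-length `dᵐ` and every `wᵐ`, the map `F_m` is
Lipschitz with constant `C Δt²/h²` in the discrete L² norm; in particular
there is `κ > 0` such that if `Δt ≤ κ h` then `F_m` is a contraction and has a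
unique fixed point. -/
theorem Fm_lipschitz_and_contraction :
    ∃ C > (0 : ℝ),
      (∀ (M : ℕ) [NeZero M], ∀ h Δt : ℝ, h = 1 / M → 0 < Δt →
        ∀ dm wm : (Fin 3 → ZMod M) → Fin 3 → ℝ, (∀ i, enorm3 (dm i) = 1) →
        ∀ u₁ u₂ : (Fin 3 → ZMod M) → Fin 3 → ℝ,
          l2norm h (Fm h Δt dm wm u₁ - Fm h Δt dm wm u₂)
            ≤ C * (Δt ^ 2 / h ^ 2) * l2norm h (u₁ - u₂)) ∧
      ∃ κ > (0 : ℝ), ∀ (M : ℕ) [NeZero M], ∀ h Δt : ℝ, h = 1 / M → 0 < Δt →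
        Δt ≤ κ * h →
        ∀ dm wm : (Fin 3 → ZMod M) → Fin 3 → ℝ, (∀ i, enorm3 (dm i) = 1) →
          C * (Δt ^ 2 / h ^ 2) < 1 ∧ ∃! u, Fm h Δt dm wm u = u := by
  have hM : ∀ (M : ℕ) [NeZero M], ∀ h : ℝ, h = 1 / M → 0 < h := by
    intro M hMne h hh
    have : (0:ℝ) < (M:ℝ) := by
      have := Nat.pos_of_ne_zero (NeZero.ne M)
      exact_mod_cast this
    rw [hh]; positivity
  refine ⟨18, by norm_num, ?_, ?_⟩
  · intro M _ h Δt hh hΔt dm wm hd u₁ u₂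
    exact Fm_l2_lip (hM M h hh) Δt dm wm (fun i => enorm3_one_sq3 (hd i)) u₁ u₂
  · refine ⟨1/5, by norm_num, ?_⟩
    intro M _ h Δt hh hΔt hκ dm wm hd
    have hh0 : 0 < h := hM M h hh
    have hlt : 18 * (Δt ^ 2 / h ^ 2) < 1 := by
      have h2 : (0:ℝ) < h^2 := by positivity
      have : Δt^2 ≤ (1/5 * h)^2 := by nlinarith
      have : Δt^2/h^2 ≤ 1/25 := by
        rw [div_le_iff₀ h2]; nlinarith
      linarith
    refine ⟨hlt, ?_⟩
    exact l2_contraction_fixed hh0 (Fm h Δt dm wm) (18 * (Δt ^ 2 / h ^ 2))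
      (by positivity) hlt
      (fun u v => Fm_l2_lip hh0 Δt dm wm (fun i => enorm3_one_sq3 (hd i)) u v)
end
end

section
/- There exists κ > 0 with the following property. For every M ≥ 1 with h = 1/M, every time step 0 < Δt ≤ κ h, and all grid functions dᵐ, wᵐ : (ℤ/Mℤ)³ → ℝ³ with |dᵐ_i| = 1 for all i, there exists a unique pair of grid functions (dᵐ⁺¹, wᵐ⁺¹) satisfying, at every grid point i, (dᵐ⁺¹_i − dᵐ_i)/Δt = d^{m+1/2}_i × w^{m+1/2}_i and (wᵐ⁺¹_i − wᵐ_i)/Δt = (Δ_h d^{m+1/2})_i × d^{m+1/2}_i, where d^{m+1/2} = (dᵐ + dᵐ⁺¹)/2 and w^{m+1/2} = (wᵐ + wᵐ⁺¹)/2. -/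
noncomputable section
open scoped BigOperators
open Matrix

set_option maxHeartbeats 1000000
set_option linter.unusedSectionVars false

def Ainv (c y : Fin 3 → ℝ) : Fin 3 → ℝ :=
  (1 + c ⬝ᵥ c)⁻¹ • (y - crossProduct c y + (c ⬝ᵥ y) • c)

lemma one_add_dot_pos (c : Fin 3 → ℝ) : (0:ℝ) < 1 + c ⬝ᵥ c := by
  simp only [dotProduct, Fin.sum_univ_three]
  nlinarith [sq_nonneg (c 0), sq_nonneg (c 1), sq_nonneg (c 2)]

lemma A_Ainv (c y : Fin 3 → ℝ) : Ainv c y - crossProduct (Ainv c y) c = y := by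
  funext i
  fin_cases i <;>
  · simp [Ainv, cross_apply, dotProduct, Fin.sum_univ_three, Matrix.vecHead, Matrix.vecTail,
      Pi.smul_apply, smul_eq_mul, Function.comp]
    ring_nf
    have h1 : (1:ℝ) + c 0 ^ 2 + c 1 ^ 2 + c 2 ^ 2 ≠ 0 := by positivity
    have h2 : (1:ℝ) + c 1 ^ 2 + c 2 ^ 2 + c 0 ^ 2 ≠ 0 := by positivity
    have h3 : (1:ℝ) + c 2 ^ 2 + c 0 ^ 2 + c 1 ^ 2 ≠ 0 := by positivity
    have h4 : (1:ℝ) + c 2 ^ 2 + c 1 ^ 2 + c 0 ^ 2 ≠ 0 := by positivity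
    have h5 : (1:ℝ) + c 0 ^ 2 + c 2 ^ 2 + c 1 ^ 2 ≠ 0 := by positivity
    have h6 : (1:ℝ) + c 1 ^ 2 + c 0 ^ 2 + c 2 ^ 2 ≠ 0 := by positivity
    field_simp
    ring

lemma Ainv_A (c x : Fin 3 → ℝ) : Ainv c (x - crossProduct x c) = x := by
  funext i
  fin_cases i <;>
  · simp [Ainv, cross_apply, dotProduct, Fin.sum_univ_three, Matrix.vecHead, Matrix.vecTail,
      Pi.smul_apply, smul_eq_mul, Function.comp]
    ring_nf
    have h1 : (1:ℝ) + c 0 ^ 2 + c 1 ^ 2 + c 2 ^ 2 ≠ 0 := by positivity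
    have h2 : (1:ℝ) + c 1 ^ 2 + c 2 ^ 2 + c 0 ^ 2 ≠ 0 := by positivity
    have h3 : (1:ℝ) + c 2 ^ 2 + c 0 ^ 2 + c 1 ^ 2 ≠ 0 := by positivity
    have h4 : (1:ℝ) + c 2 ^ 2 + c 1 ^ 2 + c 0 ^ 2 ≠ 0 := by positivity
    have h5 : (1:ℝ) + c 0 ^ 2 + c 2 ^ 2 + c 1 ^ 2 ≠ 0 := by positivity
    have h6 : (1:ℝ) + c 1 ^ 2 + c 0 ^ 2 + c 2 ^ 2 ≠ 0 := by positivity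
    field_simp
    ring

lemma Ainv_sub (c y z : Fin 3 → ℝ) : Ainv c y - Ainv c z = Ainv c (y - z) := by
  funext i
  fin_cases i <;>
  · simp [Ainv, cross_apply, dotProduct, Fin.sum_univ_three, Matrix.vecHead, Matrix.vecTail,
      Pi.smul_apply, smul_eq_mul, Function.comp]
    ring

lemma Ainv_add (c y z : Fin 3 → ℝ) : Ainv c (y + z) = Ainv c y + Ainv c z := by
  funext i
  fin_cases i <;>
  · simp [Ainv, cross_apply, dotProduct, Fin.sum_univ_three, Matrix.vecHead, Matrix.vecTail,
      Pi.smul_apply, smul_eq_mul, Function.comp]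
    ring

lemma Ainv_smul (c y : Fin 3 → ℝ) (r : ℝ) : Ainv c (r • y) = r • Ainv c y := by
  funext i
  fin_cases i <;>
  · simp [Ainv, cross_apply, dotProduct, Fin.sum_univ_three, Matrix.vecHead, Matrix.vecTail,
      Pi.smul_apply, smul_eq_mul, Function.comp]
    ring

lemma Ainv_split (c d q : Fin 3 → ℝ) :
    Ainv c (d + crossProduct d c + q) = (2:ℝ) • Ainv c d - d + Ainv c q := by
  have h : d + crossProduct d c + q = (2:ℝ) • d + (-(1:ℝ)) • (d - crossProduct d c) + q := by
    funext i; simp [Pi.smul_apply, smul_eq_mul, Pi.sub_apply, Pi.add_apply]; ring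
  rw [h, Ainv_add, Ainv_add, Ainv_smul, Ainv_smul, Ainv_A]
  funext i; simp; ring

lemma norm_apply_le (v : Fin 3 → ℝ) (j : Fin 3) : |v j| ≤ ‖v‖ := by
  simpa [Real.norm_eq_abs] using norm_le_pi_norm v j

lemma norm_cross_le (u v : Fin 3 → ℝ) : ‖crossProduct u v‖ ≤ 2 * ‖u‖ * ‖v‖ := by
  have hu := fun j => norm_apply_le u j
  have hv := fun j => norm_apply_le v j
  have h2 : (0:ℝ) ≤ 2 * ‖u‖ * ‖v‖ := by positivity
  rw [pi_norm_le_iff_of_nonneg h2]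
  intro i
  fin_cases i <;>
  · simp only [cross_apply, Real.norm_eq_abs]
    simp [Matrix.vecHead, Matrix.vecTail]
    calc |_| ≤ _ := abs_sub _ _
    _ ≤ 2 * ‖u‖ * ‖v‖ := by
        rw [abs_mul, abs_mul]
        nlinarith [hu 0, hu 1, hu 2, hv 0, hv 1, hv 2, abs_nonneg (u 0), abs_nonneg (u 1),
          abs_nonneg (u 2), abs_nonneg (v 0), abs_nonneg (v 1), abs_nonneg (v 2),
          norm_nonneg u, norm_nonneg v]

lemma abs_dot_le (u v : Fin 3 → ℝ) : |u ⬝ᵥ v| ≤ 3 * ‖u‖ * ‖v‖ := by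
  have hu := fun j => norm_apply_le u j
  have hv := fun j => norm_apply_le v j
  simp only [dotProduct, Fin.sum_univ_three]
  calc |u 0 * v 0 + u 1 * v 1 + u 2 * v 2| ≤ |u 0 * v 0| + |u 1 * v 1| + |u 2 * v 2| := by
        exact (abs_add_three _ _ _)
  _ ≤ 3 * ‖u‖ * ‖v‖ := by
      rw [abs_mul, abs_mul, abs_mul]
      nlinarith [hu 0, hu 1, hu 2, hv 0, hv 1, hv 2, abs_nonneg (u 0), abs_nonneg (u 1),
        abs_nonneg (u 2), abs_nonneg (v 0), abs_nonneg (v 1), abs_nonneg (v 2),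
        norm_nonneg u, norm_nonneg v]

lemma sq_norm_le_dot (c : Fin 3 → ℝ) : ‖c‖ ^ 2 ≤ c ⬝ᵥ c := by
  have hd : (0:ℝ) ≤ c ⬝ᵥ c := by
    simp only [dotProduct, Fin.sum_univ_three]; nlinarith [sq_nonneg (c 0), sq_nonneg (c 1), sq_nonneg (c 2)]
  have h1 : ‖c‖ ≤ Real.sqrt (c ⬝ᵥ c) := by
    rw [pi_norm_le_iff_of_nonneg (Real.sqrt_nonneg _)]
    intro j
    rw [Real.norm_eq_abs, ← Real.sqrt_sq_eq_abs]
    apply Real.sqrt_le_sqrt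
    have hsum : c ⬝ᵥ c = ∑ i, c i ^ 2 := by simp [dotProduct, sq]
    rw [hsum]
    exact Finset.single_le_sum (fun i _ => sq_nonneg (c i)) (Finset.mem_univ j)
  calc ‖c‖ ^ 2 ≤ Real.sqrt (c ⬝ᵥ c) ^ 2 := by nlinarith [norm_nonneg c, Real.sqrt_nonneg (c ⬝ᵥ c)]
  _ = c ⬝ᵥ c := Real.sq_sqrt hd

lemma norm_Ainv_le (c y : Fin 3 → ℝ) : ‖Ainv c y‖ ≤ 4 * ‖y‖ := by
  have hpos := one_add_dot_pos c
  have ht2 := sq_norm_le_dot c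
  have h1 : ‖Ainv c y‖ ≤ (1 + c ⬝ᵥ c)⁻¹ * (‖y‖ + 2 * ‖c‖ * ‖y‖ + 3 * ‖c‖ * ‖y‖ * ‖c‖) := by
    rw [Ainv, norm_smul, Real.norm_eq_abs, abs_of_pos (inv_pos.mpr hpos)]
    gcongr
    calc ‖y - crossProduct c y + (c ⬝ᵥ y) • c‖
        ≤ ‖y - crossProduct c y‖ + ‖(c ⬝ᵥ y) • c‖ := norm_add_le _ _
    _ ≤ ‖y‖ + ‖crossProduct c y‖ + ‖(c ⬝ᵥ y) • c‖ := by
        have := norm_sub_le y (crossProduct c y); linarith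
    _ ≤ ‖y‖ + 2 * ‖c‖ * ‖y‖ + 3 * ‖c‖ * ‖y‖ * ‖c‖ := by
        have h2 := norm_cross_le c y
        have h3 : ‖(c ⬝ᵥ y) • c‖ ≤ 3 * ‖c‖ * ‖y‖ * ‖c‖ := by
          rw [norm_smul, Real.norm_eq_abs]
          have := abs_dot_le c y
          have := norm_nonneg c
          nlinarith
        linarith
  calc ‖Ainv c y‖ ≤ (1 + c ⬝ᵥ c)⁻¹ * (‖y‖ + 2 * ‖c‖ * ‖y‖ + 3 * ‖c‖ * ‖y‖ * ‖c‖) := h1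
  _ ≤ 4 * ‖y‖ := by
      rw [inv_mul_le_iff₀ hpos]
      nlinarith [sq_nonneg (‖c‖ - 1), norm_nonneg y, norm_nonneg c,
        mul_nonneg (norm_nonneg y) (sub_nonneg.mpr ht2)]

lemma cross_diff_s15 (u v p q : Fin 3 → ℝ) :
    crossProduct u (crossProduct p u) - crossProduct v (crossProduct q v)
      = crossProduct (u - v) (crossProduct p u)
        + crossProduct v (crossProduct (p - q) u)
        + crossProduct v (crossProduct q (u - v)) := by
  funext i
  fin_cases i <;>
  · simp [cross_apply, Matrix.vecHead, Matrix.vecTail]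
    ring

lemma dot_identity (d' d : Fin 3 → ℝ) :
    d' ⬝ᵥ d' - d ⬝ᵥ d = (d' - d) ⬝ᵥ (d' + d) := by
  simp [dotProduct, Fin.sum_univ_three]
  ring

lemma norm_le_one_of_dot (v : Fin 3 → ℝ) (h : v ⬝ᵥ v = 1) : ‖v‖ ≤ 1 := by
  rw [pi_norm_le_iff_of_nonneg zero_le_one]
  intro j
  rw [Real.norm_eq_abs]
  have hsum : v ⬝ᵥ v = ∑ i, v i ^ 2 := by simp [dotProduct, sq]
  have h2 : v j ^ 2 ≤ 1 := by
    rw [← h, hsum]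
    exact Finset.single_le_sum (fun i _ => sq_nonneg (v i)) (Finset.mem_univ j)
  nlinarith [abs_nonneg (v j), sq_abs (v j)]

lemma eq1_iff (Δt : ℝ) (hΔ : Δt ≠ 0) (d w d' g a c q : Fin 3 → ℝ)
    (ha : a = (2:ℝ)⁻¹ • (d + d')) (hc : c = (Δt/2) • w)
    (hq : q = (Δt^2/2) • crossProduct a (crossProduct g a)) :
    (Δt⁻¹ • (d' - d) = crossProduct a ((2:ℝ)⁻¹ • (w + (w + Δt • crossProduct g a))))
      ↔ d' = Ainv c (d + crossProduct d c + q) := by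
  subst ha hc hq
  have key : (d' - d) - Δt • crossProduct ((2:ℝ)⁻¹ • (d + d'))
        ((2:ℝ)⁻¹ • (w + (w + Δt • crossProduct g ((2:ℝ)⁻¹ • (d + d')))))
      = (d' - crossProduct d' ((Δt/2) • w))
        - (d + crossProduct d ((Δt/2) • w)
            + (Δt^2/2) • crossProduct ((2:ℝ)⁻¹ • (d + d'))
                (crossProduct g ((2:ℝ)⁻¹ • (d + d')))) := by
    funext i
    fin_cases i <;>
    · simp [cross_apply, Matrix.vecHead, Matrix.vecTail]
      ring
  constructor
  · intro H
    have H1 : d' - d = Δt • crossProduct ((2:ℝ)⁻¹ • (d + d'))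
        ((2:ℝ)⁻¹ • (w + (w + Δt • crossProduct g ((2:ℝ)⁻¹ • (d + d'))))) := by
      rw [← H, smul_smul, mul_inv_cancel₀ hΔ, one_smul]
    have H2 : d' - crossProduct d' ((Δt/2) • w)
        = d + crossProduct d ((Δt/2) • w)
            + (Δt^2/2) • crossProduct ((2:ℝ)⁻¹ • (d + d'))
                (crossProduct g ((2:ℝ)⁻¹ • (d + d'))) := by
      have k2 := key
      rw [sub_eq_zero.mpr H1] at k2
      exact sub_eq_zero.mp k2.symm
    rw [← H2, Ainv_A]
  · intro H
    have H2 : d' - crossProduct d' ((Δt/2) • w)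
        = d + crossProduct d ((Δt/2) • w)
            + (Δt^2/2) • crossProduct ((2:ℝ)⁻¹ • (d + d'))
                (crossProduct g ((2:ℝ)⁻¹ • (d + d'))) := by
      conv_lhs => rw [H]
      rw [A_Ainv]
    have H1 : d' - d = Δt • crossProduct ((2:ℝ)⁻¹ • (d + d'))
        ((2:ℝ)⁻¹ • (w + (w + Δt • crossProduct g ((2:ℝ)⁻¹ • (d + d'))))) := by
      have k2 := key
      rw [sub_eq_zero.mpr H2] at k2
      exact sub_eq_zero.mp k2
    rw [H1, smul_smul, inv_mul_cancel₀ hΔ, one_smul]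

section Grid
variable {M : ℕ} [NeZero M]

lemma lapl_term_eq (h : ℝ) (u : (Fin 3 → ZMod M) → Fin 3 → ℝ) (j : Fin 3) (i : Fin 3 → ZMod M) :
    Dp h (Dm h u j) j i
      = h⁻¹ • (h⁻¹ • (u (i + Pi.single j 1) - u i) - h⁻¹ • (u i - u (i - Pi.single j 1))) := by
  simp only [Dp, Dm, add_sub_cancel_right]

lemma norm_lapl_le {h : ℝ} (hh : 0 < h) (u : (Fin 3 → ZMod M) → Fin 3 → ℝ) (i : Fin 3 → ZMod M) :
    ‖lapl h u i‖ ≤ 12 * h⁻¹ ^ 2 * ‖u‖ := by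
  have hinv : (0:ℝ) < h⁻¹ := inv_pos.mpr hh
  calc ‖lapl h u i‖ ≤ ∑ j, ‖Dp h (Dm h u j) j i‖ := norm_sum_le _ _
  _ ≤ ∑ _j : Fin 3, 4 * h⁻¹ ^ 2 * ‖u‖ := by
      apply Finset.sum_le_sum
      intro j _
      rw [lapl_term_eq, norm_smul, Real.norm_eq_abs, abs_of_pos hinv]
      have b1 : ‖h⁻¹ • (u (i + Pi.single j 1) - u i)‖ ≤ h⁻¹ * (2 * ‖u‖) := by
        rw [norm_smul, Real.norm_eq_abs, abs_of_pos hinv]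
        have := norm_sub_le (u (i + Pi.single j 1)) (u i)
        have := norm_le_pi_norm u (i + Pi.single j 1)
        have := norm_le_pi_norm u i
        nlinarith
      have b2 : ‖h⁻¹ • (u i - u (i - Pi.single j 1))‖ ≤ h⁻¹ * (2 * ‖u‖) := by
        rw [norm_smul, Real.norm_eq_abs, abs_of_pos hinv]
        have := norm_sub_le (u i) (u (i - Pi.single j 1))
        have := norm_le_pi_norm u (i - Pi.single j 1)
        have := norm_le_pi_norm u i
        nlinarith
      have := norm_sub_le (h⁻¹ • (u (i + Pi.single j 1) - u i)) (h⁻¹ • (u i - u (i - Pi.single j 1)))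
      nlinarith [norm_nonneg u]
  _ = 12 * h⁻¹ ^ 2 * ‖u‖ := by
      rw [Finset.sum_const]
      simp
      ring

lemma lapl_sub_pt (h : ℝ) (u v : (Fin 3 → ZMod M) → Fin 3 → ℝ) (i : Fin 3 → ZMod M) :
    lapl h u i - lapl h v i = lapl h (u - v) i := by
  simp only [lapl, Dp, Dm, ← Finset.sum_sub_distrib, Pi.sub_apply, smul_sub]
  apply Finset.sum_congr rfl
  intro j _
  abel

end Grid

/-- There is `κ > 0` such that for every grid, every
`0 < Δt ≤ κh`, and all grid data `dᵐ` (of unit length) and `wᵐ`, the angular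
momentum scheme has a unique solution `(dᵐ⁺¹, wᵐ⁺¹)`. -/
theorem scheme_unique_solvability :
    ∃ κ > (0 : ℝ), ∀ (M : ℕ) [NeZero M], ∀ h Δt : ℝ, h = 1 / M → 0 < Δt →
      Δt ≤ κ * h →
      ∀ dm wm : (Fin 3 → ZMod M) → Fin 3 → ℝ, (∀ i, enorm3 (dm i) = 1) →
      ∃! p : ((Fin 3 → ZMod M) → Fin 3 → ℝ) × ((Fin 3 → ZMod M) → Fin 3 → ℝ),
        ∀ i, Δt⁻¹ • (p.1 i - dm i)
            = crossProduct ((2 : ℝ)⁻¹ • (dm i + p.1 i)) ((2 : ℝ)⁻¹ • (wm i + p.2 i))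
          ∧ Δt⁻¹ • (p.2 i - wm i)
            = crossProduct (lapl h (fun j => (2 : ℝ)⁻¹ • (dm j + p.1 j)) i)
                ((2 : ℝ)⁻¹ • (dm i + p.1 i)) := by
  refine ⟨1/150, by norm_num, ?_⟩
  intro M _ h Δt hM hΔt hκ dm wm hdm
  -- basic positivity facts
  have hMpos : (0:ℝ) < M := by
    have := NeZero.ne M
    exact_mod_cast Nat.pos_of_ne_zero this
  have hh : 0 < h := by rw [hM]; positivity
  have hΔne : Δt ≠ 0 := ne_of_gt hΔt
  have hlam : Δt * h⁻¹ ≤ 1/150 := by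
    rw [show Δt * h⁻¹ = Δt / h from by ring, div_le_iff₀ hh]
    linarith
  have hlam2 : Δt ^ 2 * h⁻¹ ^ 2 ≤ 1/22500 := by
    have h1 : 0 < Δt * h⁻¹ := by positivity
    calc Δt ^ 2 * h⁻¹ ^ 2 = (Δt * h⁻¹) ^ 2 := by ring
    _ ≤ (1/150) ^ 2 := by nlinarith
    _ = 1/22500 := by norm_num
  set L : ℝ := h⁻¹ ^ 2 with hL
  have hLpos : 0 < L := by positivity
  -- facts about dm
  have hdot : ∀ i, dm i ⬝ᵥ dm i = 1 := by
    intro i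
    have h1 : Real.sqrt (∑ j, dm i j ^ 2) = 1 := hdm i
    have h2 : ∑ j, dm i j ^ 2 = 1 := Real.sqrt_eq_one.mp h1
    calc dm i ⬝ᵥ dm i = ∑ j, dm i j ^ 2 := by simp [dotProduct, sq]
    _ = 1 := h2
  have hdnorm : ∀ i, ‖dm i‖ ≤ 1 := fun i => norm_le_one_of_dot _ (hdot i)
  -- the fixed point map and the w-update map
  obtain ⟨Tm, hTm⟩ : ∃ T : ((Fin 3 → ZMod M) → Fin 3 → ℝ) → ((Fin 3 → ZMod M) → Fin 3 → ℝ),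
      T = fun x i => Ainv ((Δt/2) • wm i)
        (dm i + crossProduct (dm i) ((Δt/2) • wm i)
          + (Δt^2/2) • crossProduct ((2:ℝ)⁻¹ • (dm i + x i))
              (crossProduct (lapl h (fun j => (2:ℝ)⁻¹ • (dm j + x j)) i)
                ((2:ℝ)⁻¹ • (dm i + x i)))) := ⟨_, rfl⟩
  obtain ⟨Wm, hWm⟩ : ∃ W : ((Fin 3 → ZMod M) → Fin 3 → ℝ) → ((Fin 3 → ZMod M) → Fin 3 → ℝ),
      W = fun x i => wm i + Δt • crossProduct (lapl h (fun j => (2:ℝ)⁻¹ • (dm j + x j)) i)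
        ((2:ℝ)⁻¹ • (dm i + x i)) := ⟨_, rfl⟩
  -- equivalence of the scheme with the fixed point formulation
  have equiv : ∀ p : ((Fin 3 → ZMod M) → Fin 3 → ℝ) × ((Fin 3 → ZMod M) → Fin 3 → ℝ),
      (∀ i, Δt⁻¹ • (p.1 i - dm i)
            = crossProduct ((2 : ℝ)⁻¹ • (dm i + p.1 i)) ((2 : ℝ)⁻¹ • (wm i + p.2 i))
          ∧ Δt⁻¹ • (p.2 i - wm i)
            = crossProduct (lapl h (fun j => (2 : ℝ)⁻¹ • (dm j + p.1 j)) i)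
                ((2 : ℝ)⁻¹ • (dm i + p.1 i)))
        ↔ (p.1 = Tm p.1 ∧ p.2 = Wm p.1) := by
    intro p
    constructor
    · intro H
      have hw : p.2 = Wm p.1 := by
        funext i
        have h2 := (H i).2
        have h3 : p.2 i - wm i = Δt • crossProduct (lapl h (fun j => (2:ℝ)⁻¹ • (dm j + p.1 j)) i)
            ((2:ℝ)⁻¹ • (dm i + p.1 i)) := by
          rw [← h2, smul_smul, mul_inv_cancel₀ hΔne, one_smul]
        rw [hWm]
        exact sub_eq_iff_eq_add'.mp h3
      refine ⟨?_, hw⟩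
      funext i
      have h1 := (H i).1
      rw [hw, hWm] at h1
      simp only at h1
      rw [hTm]
      simp only
      exact (eq1_iff Δt hΔne (dm i) (wm i) (p.1 i)
        (lapl h (fun j => (2:ℝ)⁻¹ • (dm j + p.1 j)) i) _ _ _ rfl rfl rfl).mp h1
    · rintro ⟨hd, hw⟩
      intro i
      constructor
      · rw [hw, hWm]
        simp only
        exact (eq1_iff Δt hΔne (dm i) (wm i) (p.1 i)
          (lapl h (fun j => (2:ℝ)⁻¹ • (dm j + p.1 j)) i) _ _ _ rfl rfl rfl).mpr
          (by rw [hTm] at hd; simpa using congrFun hd i)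
      · rw [hw, hWm]
        simp only
        rw [add_sub_cancel_left, smul_smul, inv_mul_cancel₀ hΔne, one_smul]
  -- norm of the midpoint function
  have hax : ∀ x : (Fin 3 → ZMod M) → Fin 3 → ℝ, ‖x‖ ≤ 10 →
      ‖(fun j => (2:ℝ)⁻¹ • (dm j + x j))‖ ≤ 6 := by
    intro x hx
    rw [pi_norm_le_iff_of_nonneg (by norm_num)]
    intro j
    have h1 := norm_add_le (dm j) (x j)
    have h2 := norm_le_pi_norm x j
    have h3 := hdnorm j
    rw [norm_smul, Real.norm_eq_abs, abs_of_pos (by norm_num : (0:ℝ) < (2:ℝ)⁻¹)]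
    nlinarith
  have haxp : ∀ x : (Fin 3 → ZMod M) → Fin 3 → ℝ, ‖x‖ ≤ 10 →
      ∀ i, ‖(2:ℝ)⁻¹ • (dm i + x i)‖ ≤ 6 := by
    intro x hx i
    have := norm_le_pi_norm (fun j => (2:ℝ)⁻¹ • (dm j + x j)) i
    exact le_trans this (hax x hx)
  have hgb : ∀ x : (Fin 3 → ZMod M) → Fin 3 → ℝ, ‖x‖ ≤ 10 →
      ∀ i, ‖lapl h (fun j => (2:ℝ)⁻¹ • (dm j + x j)) i‖ ≤ 72 * L := by
    intro x hx i
    calc ‖lapl h (fun j => (2:ℝ)⁻¹ • (dm j + x j)) i‖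
        ≤ 12 * h⁻¹ ^ 2 * ‖(fun j => (2:ℝ)⁻¹ • (dm j + x j))‖ := norm_lapl_le hh _ i
    _ ≤ 72 * L := by
        have := hax x hx
        rw [← hL]
        nlinarith
  have hqb : ∀ x : (Fin 3 → ZMod M) → Fin 3 → ℝ, ‖x‖ ≤ 10 → ∀ i,
      ‖(Δt^2/2) • crossProduct ((2:ℝ)⁻¹ • (dm i + x i))
        (crossProduct (lapl h (fun j => (2:ℝ)⁻¹ • (dm j + x j)) i)
          ((2:ℝ)⁻¹ • (dm i + x i)))‖ ≤ 1/4 := by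
    intro x hx i
    have ha := haxp x hx i
    have hg := hgb x hx i
    have hc1 := norm_cross_le (lapl h (fun j => (2:ℝ)⁻¹ • (dm j + x j)) i) ((2:ℝ)⁻¹ • (dm i + x i))
    have hc2 := norm_cross_le ((2:ℝ)⁻¹ • (dm i + x i))
      (crossProduct (lapl h (fun j => (2:ℝ)⁻¹ • (dm j + x j)) i) ((2:ℝ)⁻¹ • (dm i + x i)))
    rw [norm_smul, Real.norm_eq_abs, abs_of_pos (by positivity : (0:ℝ) < Δt^2/2)]
    have hn1 : (0:ℝ) ≤ ‖(2:ℝ)⁻¹ • (dm i + x i)‖ := norm_nonneg _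
    have hn2 : (0:ℝ) ≤ ‖lapl h (fun j => (2:ℝ)⁻¹ • (dm j + x j)) i‖ := norm_nonneg _
    have hn3 : (0:ℝ) ≤ ‖crossProduct (lapl h (fun j => (2:ℝ)⁻¹ • (dm j + x j)) i)
      ((2:ℝ)⁻¹ • (dm i + x i))‖ := norm_nonneg _
    have hkey : ‖crossProduct ((2:ℝ)⁻¹ • (dm i + x i))
        (crossProduct (lapl h (fun j => (2:ℝ)⁻¹ • (dm j + x j)) i)
          ((2:ℝ)⁻¹ • (dm i + x i)))‖ ≤ 10368 * L := by nlinarith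
    have hL2 : Δt^2 * L ≤ 1/22500 := by rw [hL]; exact hlam2
    nlinarith [sq_nonneg Δt, hLpos]
  -- ball invariance
  have hTball : ∀ x : (Fin 3 → ZMod M) → Fin 3 → ℝ, ‖x‖ ≤ 10 → ‖Tm x‖ ≤ 10 := by
    intro x hx
    rw [hTm, pi_norm_le_iff_of_nonneg (by norm_num)]
    intro i
    simp only
    rw [Ainv_split]
    have b1 : ‖(2:ℝ) • Ainv ((Δt/2) • wm i) (dm i)‖ ≤ 8 := by
      rw [norm_smul, Real.norm_eq_abs, abs_of_pos (by norm_num : (0:ℝ) < 2)]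
      have := norm_Ainv_le ((Δt/2) • wm i) (dm i)
      have := hdnorm i
      nlinarith [norm_nonneg (Ainv ((Δt/2) • wm i) (dm i))]
    have b2 := hdnorm i
    have b3 : ‖Ainv ((Δt/2) • wm i) ((Δt^2/2) • crossProduct ((2:ℝ)⁻¹ • (dm i + x i))
        (crossProduct (lapl h (fun j => (2:ℝ)⁻¹ • (dm j + x j)) i)
          ((2:ℝ)⁻¹ • (dm i + x i))))‖ ≤ 1 := by
      have h4 := norm_Ainv_le ((Δt/2) • wm i) ((Δt^2/2) • crossProduct ((2:ℝ)⁻¹ • (dm i + x i))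
        (crossProduct (lapl h (fun j => (2:ℝ)⁻¹ • (dm j + x j)) i)
          ((2:ℝ)⁻¹ • (dm i + x i))))
      have h5 := hqb x hx i
      linarith
    have htri := norm_add_le ((2:ℝ) • Ainv ((Δt/2) • wm i) (dm i) - dm i)
      (Ainv ((Δt/2) • wm i) ((Δt^2/2) • crossProduct ((2:ℝ)⁻¹ • (dm i + x i))
        (crossProduct (lapl h (fun j => (2:ℝ)⁻¹ • (dm j + x j)) i)
          ((2:ℝ)⁻¹ • (dm i + x i)))))
    have htri2 := norm_sub_le ((2:ℝ) • Ainv ((Δt/2) • wm i) (dm i)) (dm i)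
    linarith
  -- contraction estimate
  have hlip : ∀ x y : (Fin 3 → ZMod M) → Fin 3 → ℝ, ‖x‖ ≤ 10 → ‖y‖ ≤ 10 →
      ‖Tm x - Tm y‖ ≤ (1/2) * ‖x - y‖ := by
    intro x y hx hy
    have hδ : (0:ℝ) ≤ ‖x - y‖ := norm_nonneg _
    rw [pi_norm_le_iff_of_nonneg (by positivity)]
    intro i
    rw [Pi.sub_apply, hTm]
    simp only
    rw [Ainv_sub, add_sub_add_left_eq_sub, ← smul_sub, cross_diff_s15]
    have hu := haxp x hx i
    have hv := haxp y hy i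
    have hp := hgb x hx i
    have hq := hgb y hy i
    have huv : ‖(2:ℝ)⁻¹ • (dm i + x i) - (2:ℝ)⁻¹ • (dm i + y i)‖ ≤ 2⁻¹ * ‖x - y‖ := by
      rw [← smul_sub, add_sub_add_left_eq_sub, norm_smul, Real.norm_eq_abs,
        abs_of_pos (by norm_num : (0:ℝ) < (2:ℝ)⁻¹)]
      have hxy : ‖x i - y i‖ ≤ ‖x - y‖ := by simpa using norm_le_pi_norm (x - y) i
      nlinarith
    have hpq : ‖lapl h (fun j => (2:ℝ)⁻¹ • (dm j + x j)) i
        - lapl h (fun j => (2:ℝ)⁻¹ • (dm j + y j)) i‖ ≤ 6 * L * ‖x - y‖ := by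
      rw [lapl_sub_pt]
      have haxg : ‖(fun j => (2:ℝ)⁻¹ • (dm j + x j)) - (fun j => (2:ℝ)⁻¹ • (dm j + y j))‖
          ≤ 2⁻¹ * ‖x - y‖ := by
        rw [pi_norm_le_iff_of_nonneg (by positivity)]
        intro j
        rw [Pi.sub_apply, ← smul_sub, add_sub_add_left_eq_sub, norm_smul, Real.norm_eq_abs,
          abs_of_pos (by norm_num : (0:ℝ) < (2:ℝ)⁻¹)]
        have hxy : ‖x j - y j‖ ≤ ‖x - y‖ := by simpa using norm_le_pi_norm (x - y) j
        nlinarith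
      calc ‖lapl h ((fun j => (2:ℝ)⁻¹ • (dm j + x j)) - (fun j => (2:ℝ)⁻¹ • (dm j + y j))) i‖
          ≤ 12 * h⁻¹ ^ 2 * ‖(fun j => (2:ℝ)⁻¹ • (dm j + x j)) - (fun j => (2:ℝ)⁻¹ • (dm j + y j))‖ :=
            norm_lapl_le hh _ i
      _ ≤ 6 * L * ‖x - y‖ := by rw [← hL]; nlinarith
    -- three cross difference terms
    have hcpu : ‖crossProduct (lapl h (fun j => (2:ℝ)⁻¹ • (dm j + x j)) i)
        ((2:ℝ)⁻¹ • (dm i + x i))‖ ≤ 864 * L := by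
      have := norm_cross_le (lapl h (fun j => (2:ℝ)⁻¹ • (dm j + x j)) i) ((2:ℝ)⁻¹ • (dm i + x i))
      nlinarith [norm_nonneg (lapl h (fun j => (2:ℝ)⁻¹ • (dm j + x j)) i),
        norm_nonneg ((2:ℝ)⁻¹ • (dm i + x i)), hLpos]
    have ht1 : ‖crossProduct ((2:ℝ)⁻¹ • (dm i + x i) - (2:ℝ)⁻¹ • (dm i + y i))
        (crossProduct (lapl h (fun j => (2:ℝ)⁻¹ • (dm j + x j)) i) ((2:ℝ)⁻¹ • (dm i + x i)))‖
        ≤ 864 * L * ‖x - y‖ := by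
      have hc := norm_cross_le ((2:ℝ)⁻¹ • (dm i + x i) - (2:ℝ)⁻¹ • (dm i + y i))
        (crossProduct (lapl h (fun j => (2:ℝ)⁻¹ • (dm j + x j)) i) ((2:ℝ)⁻¹ • (dm i + x i)))
      nlinarith [norm_nonneg ((2:ℝ)⁻¹ • (dm i + x i) - (2:ℝ)⁻¹ • (dm i + y i)),
        norm_nonneg (crossProduct (lapl h (fun j => (2:ℝ)⁻¹ • (dm j + x j)) i)
          ((2:ℝ)⁻¹ • (dm i + x i))), hLpos]
    have ht2 : ‖crossProduct ((2:ℝ)⁻¹ • (dm i + y i))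
        (crossProduct (lapl h (fun j => (2:ℝ)⁻¹ • (dm j + x j)) i
          - lapl h (fun j => (2:ℝ)⁻¹ • (dm j + y j)) i) ((2:ℝ)⁻¹ • (dm i + x i)))‖
        ≤ 864 * L * ‖x - y‖ := by
      have hinner := norm_cross_le (lapl h (fun j => (2:ℝ)⁻¹ • (dm j + x j)) i
          - lapl h (fun j => (2:ℝ)⁻¹ • (dm j + y j)) i) ((2:ℝ)⁻¹ • (dm i + x i))
      have houter := norm_cross_le ((2:ℝ)⁻¹ • (dm i + y i))
        (crossProduct (lapl h (fun j => (2:ℝ)⁻¹ • (dm j + x j)) i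
          - lapl h (fun j => (2:ℝ)⁻¹ • (dm j + y j)) i) ((2:ℝ)⁻¹ • (dm i + x i)))
      nlinarith [norm_nonneg ((2:ℝ)⁻¹ • (dm i + y i)),
        norm_nonneg (lapl h (fun j => (2:ℝ)⁻¹ • (dm j + x j)) i
          - lapl h (fun j => (2:ℝ)⁻¹ • (dm j + y j)) i),
        norm_nonneg (crossProduct (lapl h (fun j => (2:ℝ)⁻¹ • (dm j + x j)) i
          - lapl h (fun j => (2:ℝ)⁻¹ • (dm j + y j)) i) ((2:ℝ)⁻¹ • (dm i + x i))),
        hLpos, hδ]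
    have ht3 : ‖crossProduct ((2:ℝ)⁻¹ • (dm i + y i))
        (crossProduct (lapl h (fun j => (2:ℝ)⁻¹ • (dm j + y j)) i)
          ((2:ℝ)⁻¹ • (dm i + x i) - (2:ℝ)⁻¹ • (dm i + y i)))‖ ≤ 864 * L * ‖x - y‖ := by
      have hinner := norm_cross_le (lapl h (fun j => (2:ℝ)⁻¹ • (dm j + y j)) i)
        ((2:ℝ)⁻¹ • (dm i + x i) - (2:ℝ)⁻¹ • (dm i + y i))
      have houter := norm_cross_le ((2:ℝ)⁻¹ • (dm i + y i))
        (crossProduct (lapl h (fun j => (2:ℝ)⁻¹ • (dm j + y j)) i)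
          ((2:ℝ)⁻¹ • (dm i + x i) - (2:ℝ)⁻¹ • (dm i + y i)))
      nlinarith [norm_nonneg ((2:ℝ)⁻¹ • (dm i + y i)),
        norm_nonneg (lapl h (fun j => (2:ℝ)⁻¹ • (dm j + y j)) i),
        norm_nonneg ((2:ℝ)⁻¹ • (dm i + x i) - (2:ℝ)⁻¹ • (dm i + y i)),
        norm_nonneg (crossProduct (lapl h (fun j => (2:ℝ)⁻¹ • (dm j + y j)) i)
          ((2:ℝ)⁻¹ • (dm i + x i) - (2:ℝ)⁻¹ • (dm i + y i))),
        hLpos, hδ]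
    -- assemble
    have hsum : ‖crossProduct ((2:ℝ)⁻¹ • (dm i + x i) - (2:ℝ)⁻¹ • (dm i + y i))
        (crossProduct (lapl h (fun j => (2:ℝ)⁻¹ • (dm j + x j)) i) ((2:ℝ)⁻¹ • (dm i + x i)))
        + crossProduct ((2:ℝ)⁻¹ • (dm i + y i))
          (crossProduct (lapl h (fun j => (2:ℝ)⁻¹ • (dm j + x j)) i
            - lapl h (fun j => (2:ℝ)⁻¹ • (dm j + y j)) i) ((2:ℝ)⁻¹ • (dm i + x i)))
        + crossProduct ((2:ℝ)⁻¹ • (dm i + y i))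
          (crossProduct (lapl h (fun j => (2:ℝ)⁻¹ • (dm j + y j)) i)
            ((2:ℝ)⁻¹ • (dm i + x i) - (2:ℝ)⁻¹ • (dm i + y i)))‖ ≤ 2592 * L * ‖x - y‖ := by
      have n1 := norm_add_le (crossProduct ((2:ℝ)⁻¹ • (dm i + x i) - (2:ℝ)⁻¹ • (dm i + y i))
        (crossProduct (lapl h (fun j => (2:ℝ)⁻¹ • (dm j + x j)) i) ((2:ℝ)⁻¹ • (dm i + x i)))
        + crossProduct ((2:ℝ)⁻¹ • (dm i + y i))
          (crossProduct (lapl h (fun j => (2:ℝ)⁻¹ • (dm j + x j)) i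
            - lapl h (fun j => (2:ℝ)⁻¹ • (dm j + y j)) i) ((2:ℝ)⁻¹ • (dm i + x i))))
        (crossProduct ((2:ℝ)⁻¹ • (dm i + y i))
          (crossProduct (lapl h (fun j => (2:ℝ)⁻¹ • (dm j + y j)) i)
            ((2:ℝ)⁻¹ • (dm i + x i) - (2:ℝ)⁻¹ • (dm i + y i))))
      have n2 := norm_add_le (crossProduct ((2:ℝ)⁻¹ • (dm i + x i) - (2:ℝ)⁻¹ • (dm i + y i))
        (crossProduct (lapl h (fun j => (2:ℝ)⁻¹ • (dm j + x j)) i) ((2:ℝ)⁻¹ • (dm i + x i))))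
        (crossProduct ((2:ℝ)⁻¹ • (dm i + y i))
          (crossProduct (lapl h (fun j => (2:ℝ)⁻¹ • (dm j + x j)) i
            - lapl h (fun j => (2:ℝ)⁻¹ • (dm j + y j)) i) ((2:ℝ)⁻¹ • (dm i + x i))))
      linarith
    have hAb := norm_Ainv_le ((Δt/2) • wm i) ((Δt^2/2) •
      (crossProduct ((2:ℝ)⁻¹ • (dm i + x i) - (2:ℝ)⁻¹ • (dm i + y i))
        (crossProduct (lapl h (fun j => (2:ℝ)⁻¹ • (dm j + x j)) i) ((2:ℝ)⁻¹ • (dm i + x i)))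
        + crossProduct ((2:ℝ)⁻¹ • (dm i + y i))
          (crossProduct (lapl h (fun j => (2:ℝ)⁻¹ • (dm j + x j)) i
            - lapl h (fun j => (2:ℝ)⁻¹ • (dm j + y j)) i) ((2:ℝ)⁻¹ • (dm i + x i)))
        + crossProduct ((2:ℝ)⁻¹ • (dm i + y i))
          (crossProduct (lapl h (fun j => (2:ℝ)⁻¹ • (dm j + y j)) i)
            ((2:ℝ)⁻¹ • (dm i + x i) - (2:ℝ)⁻¹ • (dm i + y i)))))
    rw [norm_smul, Real.norm_eq_abs, abs_of_pos (by positivity : (0:ℝ) < Δt^2/2)] at hAb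
    have hfin : Δt^2 * L * ‖x - y‖ ≤ (1/22500) * ‖x - y‖ :=
      mul_le_mul_of_nonneg_right hlam2 hδ
    nlinarith [sq_nonneg Δt, hLpos, hδ, hsum]
  -- Banach fixed point on the closed ball of radius 10
  let B := Metric.closedBall (0 : (Fin 3 → ZMod M) → Fin 3 → ℝ) 10
  haveI : CompleteSpace B := IsClosed.completeSpace_coe (hs := Metric.isClosed_closedBall)
  haveI : Nonempty B := ⟨⟨0, by simp [B]⟩⟩
  let F : B → B := fun z => ⟨Tm z.1,
    mem_closedBall_zero_iff.mpr (hTball z.1 (mem_closedBall_zero_iff.mp z.2))⟩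
  have hcontr : ContractingWith (1/2 : NNReal) F := by
    constructor
    · rw [← NNReal.coe_lt_coe]
      norm_num
    · apply LipschitzWith.of_dist_le_mul
      intro z w
      rw [Subtype.dist_eq, Subtype.dist_eq, dist_eq_norm, dist_eq_norm]
      have hl := hlip z.1 w.1 (mem_closedBall_zero_iff.mp z.2) (mem_closedBall_zero_iff.mp w.2)
      have hc : ((1/2 : NNReal) : ℝ) = 1/2 := by norm_num
      rw [hc]
      exact hl
  set x₀ : B := ContractingWith.fixedPoint F hcontr with hx₀
  have hfixF : F x₀ = x₀ := ContractingWith.fixedPoint_isFixedPt hcontr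
  have hfix : Tm x₀.1 = x₀.1 := congrArg Subtype.val hfixF
  have hx0ball : ‖x₀.1‖ ≤ 10 := mem_closedBall_zero_iff.mp x₀.2
  refine ⟨(x₀.1, Wm x₀.1), (equiv (x₀.1, Wm x₀.1)).mpr ⟨hfix.symm, rfl⟩, ?_⟩
  intro p' hp'
  obtain ⟨hd', hw'⟩ := (equiv p').mp hp'
  -- a priori bound on any solution
  have hball' : ‖p'.1‖ ≤ 10 := by
    rw [pi_norm_le_iff_of_nonneg (by norm_num)]
    intro i
    have h1 := (hp' i).1
    have hsub : p'.1 i - dm i = Δt • crossProduct ((2:ℝ)⁻¹ • (dm i + p'.1 i))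
        ((2:ℝ)⁻¹ • (wm i + p'.2 i)) := by
      rw [← h1, smul_smul, mul_inv_cancel₀ hΔne, one_smul]
    have h2a : p'.1 i + dm i = (2:ℝ) • ((2:ℝ)⁻¹ • (dm i + p'.1 i)) := by
      rw [smul_smul, mul_inv_cancel₀ (two_ne_zero), one_smul, add_comm]
    have hz : (p'.1 i - dm i) ⬝ᵥ (p'.1 i + dm i) = 0 := by
      rw [hsub, h2a, smul_dotProduct, dotProduct_smul]
      have hzz : crossProduct ((2:ℝ)⁻¹ • (dm i + p'.1 i)) ((2:ℝ)⁻¹ • (wm i + p'.2 i))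
          ⬝ᵥ ((2:ℝ)⁻¹ • (dm i + p'.1 i)) = 0 := by
        rw [dotProduct_comm]
        exact dot_self_cross _ _
      rw [hzz]
      simp
    have hdd : p'.1 i ⬝ᵥ p'.1 i = 1 := by
      have hid := dot_identity (p'.1 i) (dm i)
      rw [hz] at hid
      have h3 := hdot i
      linarith
    have hle := norm_le_one_of_dot _ hdd
    linarith
  have hdist : ‖p'.1 - x₀.1‖ ≤ (1/2) * ‖p'.1 - x₀.1‖ := by
    conv_lhs => rw [hd', ← hfix]
    exact hlip _ _ hball' hx0ball
  have heq1 : p'.1 = x₀.1 := by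
    have h0 : ‖p'.1 - x₀.1‖ ≤ 0 := by linarith
    have h1 := norm_nonneg (p'.1 - x₀.1)
    have h2 : ‖p'.1 - x₀.1‖ = 0 := le_antisymm h0 h1
    exact sub_eq_zero.mp (norm_eq_zero.mp h2)
  exact Prod.ext heq1 (by rw [hw', heq1])
end
end
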